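/- arXiv:1809.02733 — 5 statements merged into one kernel-verified Lean document; each statement's English description precedes it below -/
import Mathlib

section
/- Let A be a finite group acting by automorphisms on a finite group G with gcd(|A|,|G|) = 1. Then [G, A, A] = [G, A], where [G,A] is the subgroup of G generated by all g⁻¹(a•g) with g ∈ G, a ∈ A. -/
open Subgroup Pointwise

section Helpers
variable {M : Type*} [Group M]

lemma conj_smul_self {H : Subgroup M} {a : M} (ha : a ∈ H) :
    MulAut.conj a • H = H := by
  apply le_antisymm
  · rintro x ⟨y, hy, rfl⟩
    exact H.mul_mem (H.mul_mem ha hy) (H.inv_mem ha)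
  · intro x hx
    exact ⟨a⁻¹ * x * a, H.mul_mem (H.mul_mem (H.inv_mem ha) hx) ha,
      by simp [MulAut.conj]; group⟩

lemma card_conj_smul (a : M) (H : Subgroup M) :
    Nat.card (MulAut.conj a • H : Subgroup M) = Nat.card H :=
  Nat.card_congr ((MulAut.conj a).subgroupMap H).toEquiv.symm

lemma conj_conj_smul (a b : M) (H : Subgroup M) :
    MulAut.conj a • MulAut.conj b • H = MulAut.conj (a * b) • H := by
  rw [map_mul, mul_smul]

lemma map_conj_smul {P : Type*} [Group P] (f : M →* P) (a : M) (H : Subgroup M) :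
    (MulAut.conj a • H).map f = MulAut.conj (f a) • H.map f := by
  show ((H.map (MulAut.conj a).toMonoidHom).map f) = (H.map f).map (MulAut.conj (f a)).toMonoidHom
  rw [Subgroup.map_map, Subgroup.map_map]
  congr 1
  ext x
  simp [MulAut.conj]

lemma subgroupOf_eq_bot {K H : Subgroup M} (h : Disjoint K H) : K.subgroupOf H = ⊥ := by
  rw [eq_bot_iff]
  rintro ⟨x, hxH⟩ hx
  have : x ∈ K ⊓ H := ⟨hx, hxH⟩
  rw [h.eq_bot] at this
  simpa [Subgroup.mem_bot, Subtype.ext_iff] using this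

lemma card_map_mul_card_ker {P : Type*} [Group P] (f : M →* P) (H : Subgroup M) :
    Nat.card (H.map f) * Nat.card (f.ker.subgroupOf H) = Nat.card H := by
  have h1 := Subgroup.card_eq_card_quotient_mul_card_subgroup (α := H) ((f.domRestrict H).ker)
  rw [MonoidHom.ker_restrict] at h1
  have h2 : Nat.card (H ⧸ (f.ker.subgroupOf H)) = Nat.card (H.map f) := by
    have := (QuotientGroup.quotientKerEquivRange (f.domRestrict H)).toEquiv
    rw [MonoidHom.ker_restrict, MonoidHom.restrict_range] at this
    exact Nat.card_congr this
  rw [h2] at h1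
  exact h1.symm

lemma card_map_of_disjoint_ker {P : Type*} [Group P] {f : M →* P} {H : Subgroup M}
    (h : Disjoint f.ker H) : Nat.card (H.map f) = Nat.card H := by
  have h1 := card_map_mul_card_ker f H
  rw [subgroupOf_eq_bot h] at h1
  simpa using h1

lemma subgroupOf_injOn {H K L : Subgroup M} (hH : H ≤ L) (hK : K ≤ L)
    (h : H.subgroupOf L = K.subgroupOf L) : H = K := by
  have := congrArg (Subgroup.map L.subtype) h
  rwa [Subgroup.subgroupOf_map_subtype, Subgroup.subgroupOf_map_subtype,
    inf_eq_left.mpr hH, inf_eq_left.mpr hK] at this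

lemma card_subgroupOf {H L : Subgroup M} (hH : H ≤ L) :
    Nat.card (H.subgroupOf L) = Nat.card H :=
  Nat.card_congr (Subgroup.subgroupOfEquivOfLe hH).toEquiv

lemma card_lt_of_ne_top [Finite M] {L : Subgroup M} (h : L ≠ ⊤) :
    Nat.card L < Nat.card M := by
  have hdvd := Subgroup.card_subgroup_dvd_card L
  have hpos : 0 < Nat.card M := Nat.card_pos
  rcases lt_or_eq_of_le (Nat.le_of_dvd hpos hdvd) with h' | h'
  · exact h'
  · exact absurd (Subgroup.eq_top_of_card_eq L h') h

end Helpers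

section Helpers
variable {M : Type*} [Group M]

lemma exists_decomp {N A : Subgroup M} (h : N.IsComplement' A) (m : M) :
    ∃ n ∈ N, ∃ a ∈ A, n * a = m := by
  obtain ⟨⟨n, a⟩, h1, -⟩ := h.existsUnique m
  exact ⟨n, n.2, a, a.2, h1⟩

lemma complement_mk'_bijective {N A : Subgroup M} [N.Normal] (hA : N.IsComplement' A) :
    Function.Bijective ((QuotientGroup.mk' N).comp A.subtype) := by
  constructor
  · rw [← MonoidHom.ker_eq_bot_iff, eq_bot_iff]
    rintro a ha
    have : (a : M) ∈ N := by
      simpa [MonoidHom.mem_ker, QuotientGroup.eq_one_iff] using ha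
    have h1 : (a : M) = 1 := Subgroup.disjoint_def.mp hA.disjoint this a.2
    rw [Subgroup.mem_bot]
    exact Subtype.ext h1
  · intro q
    obtain ⟨m, rfl⟩ := QuotientGroup.mk'_surjective N q
    obtain ⟨n, hn, a, ha, rfl⟩ := exists_decomp hA m
    refine ⟨⟨a, ha⟩, ?_⟩
    show QuotientGroup.mk' N a = QuotientGroup.mk' N (n * a)
    rw [QuotientGroup.mk'_eq_mk']
    exact ⟨a⁻¹ * n * a, ‹N.Normal›.conj_mem' n hn a, by group⟩
end Helpers

universe u

theorem conj_of_complement (n : ℕ) : ∀ (M : Type u) [Group M] [Finite M],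
    Nat.card M ≤ n → ∀ (N A B : Subgroup M) [N.Normal], N.IsComplement' A →
    N.IsComplement' B → (Nat.card N).Coprime N.index → IsCyclic (M ⧸ N) →
    ∃ m : M, MulAut.conj m • A = B := by
  induction n using Nat.strong_induction_on with
  | _ n ih =>
  intro M _ _ hcard N A B hNnorm hA hB hco hcyc
  haveI := hcyc
  by_cases hidx : N.index = 1
  · -- trivial case : A = B = ⊥
    have hcA : Nat.card A = 1 := by rw [← hA.symm.index_eq_card, hidx]
    have hcB : Nat.card B = 1 := by rw [← hB.symm.index_eq_card, hidx]
    refine ⟨1, ?_⟩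
    rw [Subgroup.card_eq_one.mp hcA, Subgroup.card_eq_one.mp hcB, map_one, one_smul]
  · -- main case
    set p := N.index.minFac with hp_def
    have hp_prime : p.Prime := Nat.minFac_prime hidx
    haveI : Fact p.Prime := ⟨hp_prime⟩
    have hpdvd : p ∣ N.index := Nat.minFac_dvd _
    haveI : Fintype (M ⧸ N) := Fintype.ofFinite _
    obtain ⟨gbar, hg⟩ := exists_prime_orderOf_dvd_card (G := M ⧸ N) p
      (by rwa [← Nat.card_eq_fintype_card, ← Subgroup.index_eq_card])
    set Kbar : Subgroup (M ⧸ N) := Subgroup.zpowers gbar with hKbar_def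
    have hcardKbar : Nat.card Kbar = p := by rw [Nat.card_zpowers, hg]
    have hcomm : ∀ x y : M ⧸ N, x * y = y * x := by
      letI := hcyc.commGroup
      exact fun x y => mul_comm x y
    haveI hKbarNormal : Kbar.Normal := ⟨fun k hk g => by rw [hcomm g k]; group; simpa⟩
    set K : Subgroup M := Kbar.comap (QuotientGroup.mk' N) with hK_def
    haveI hKnorm : K.Normal := Subgroup.Normal.comap hKbarNormal _
    have hNK : N ≤ K := fun x hx => by
      show QuotientGroup.mk' N x ∈ Kbar
      rw [show QuotientGroup.mk' N x = 1 from (QuotientGroup.eq_one_iff x).mpr hx]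
      exact Kbar.one_mem
    have hcardN_pos : 0 < Nat.card N := Nat.card_pos
    have hpN : ¬ p ∣ Nat.card N := by
      intro hdvd
      exact hp_prime.ne_one (Nat.eq_one_of_dvd_one (hco ▸ Nat.dvd_gcd hdvd hpdvd))
    have hcardK : Nat.card K = p * Nat.card N := by
      have h1 := card_map_mul_card_ker (QuotientGroup.mk' N) K
      rw [QuotientGroup.ker_mk'] at h1
      rw [Subgroup.map_comap_eq_self_of_surjective (QuotientGroup.mk'_surjective N)] at h1
      rw [← h1, hcardKbar, card_subgroupOf hNK]
    -- the subgroup A ⊓ K has cardinality p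
    have cardinf : ∀ C : Subgroup M, N.IsComplement' C → Nat.card (C ⊓ K : Subgroup M) = p := by
      intro C hC
      have hbij := complement_mk'_bijective hC
      set ψ := (QuotientGroup.mk' N).comp C.subtype with hψ
      have e1 : Nat.card (K.subgroupOf C) = Nat.card Kbar := by
        refine Nat.card_congr (Equiv.subtypeEquiv (Equiv.ofBijective _ hbij) fun a => ?_)
        show (a : M) ∈ K ↔ _
        exact Iff.rfl
      rw [← Subgroup.inf_subgroupOf_right K C, inf_comm] at e1
      rw [← card_subgroupOf (inf_le_left : C ⊓ K ≤ C)]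
      rw [e1, hcardKbar]
    have hfact : (Nat.card K).factorization p = 1 := by
      rw [hcardK, Nat.factorization_mul hp_prime.ne_zero hcardN_pos.ne']
      simp [hp_prime.factorization, Nat.factorization_eq_zero_of_not_dvd hpN]
    have hsylow_card : ∀ C : Subgroup M, N.IsComplement' C →
        Nat.card ((C ⊓ K).subgroupOf K) = p ^ (Nat.card K).factorization p := by
      intro C hC
      rw [card_subgroupOf (inf_le_right : C ⊓ K ≤ K), cardinf C hC, hfact, pow_one]
    set PA : Sylow p K := Sylow.ofCard _ (hsylow_card A hA) with hPA
    set PB : Sylow p K := Sylow.ofCard _ (hsylow_card B hB) with hPB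
    obtain ⟨x, hx⟩ := MulAction.exists_smul_eq K PA PB
    have hx' : MulAut.conj x • ((A ⊓ K).subgroupOf K) = (B ⊓ K).subgroupOf K := by
      have := congrArg Sylow.toSubgroup hx
      rwa [Sylow.coe_subgroup_smul] at this
    rw [Subgroup.conj_smul_subgroupOf (inf_le_right : A ⊓ K ≤ K) x] at hx'
    have hDx : MulAut.conj (x : M) • (A ⊓ K) = B ⊓ K :=
      subgroupOf_injOn (Subgroup.conj_smul_le_of_le (inf_le_right) x) inf_le_right hx'
    set A' : Subgroup M := MulAut.conj (x : M) • A with hA'def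
    have hA'K : A' ⊓ K = B ⊓ K := by
      rw [show A' ⊓ K = MulAut.conj (x : M) • (A ⊓ K) from by
        rw [Subgroup.smul_inf, Subgroup.Normal.conj_smul_eq_self (x : M) K]]
      exact hDx
    set D : Subgroup M := B ⊓ K with hDdef
    have hcardD : Nat.card D = p := cardinf B hB
    have hDbot : D ≠ ⊥ := by
      intro h
      rw [h] at hcardD
      simp at hcardD
      exact hp_prime.ne_one hcardD.symm
    have hDB : D ≤ B := inf_le_left
    have hDA' : D ≤ A' := by rw [← hA'K]; exact inf_le_left
    have hdisjNA' : Disjoint N A' := by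
      rw [disjoint_iff]
      rw [show N ⊓ A' = MulAut.conj (x : M) • (N ⊓ A) from by
        rw [Subgroup.smul_inf, Subgroup.Normal.conj_smul_eq_self (x : M) N]]
      rw [disjoint_iff.mp hA.disjoint, Subgroup.smul_bot]
    have hcardA' : Nat.card A' = Nat.card A := card_conj_smul _ _
    have hA'compl : N.IsComplement' A' :=
      Subgroup.isComplement'_of_card_mul_and_disjoint
        (by rw [hcardA', hA.card_mul]) hdisjNA'
    by_cases hDnormal : Subgroup.normalizer (D : Set M) = ⊤
    · haveI hDnorm : D.Normal := Subgroup.normalizer_eq_top_iff.mp hDnormal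
      set π := QuotientGroup.mk' D with hπ
      have hkerπ : π.ker = D := QuotientGroup.ker_mk' D
      set Nt := N.map π with hNt
      set At := A'.map π with hAt
      set Bt := B.map π with hBt
      haveI hNtnorm : Nt.Normal := Subgroup.Normal.map hNnorm π (QuotientGroup.mk'_surjective D)
      have hdisjND : Disjoint N D := hB.disjoint.mono_right hDB
      have hcardNt : Nat.card Nt = Nat.card N :=
        card_map_of_disjoint_ker (by rw [hkerπ]; exact hdisjND.symm)
      have hcardMbar : Nat.card (M ⧸ D) * p = Nat.card M := by
        rw [show Nat.card M = Nat.card (M ⧸ D) * Nat.card D from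
          Subgroup.card_eq_card_quotient_mul_card_subgroup D, hcardD]
      have hcardAt : Nat.card At * p = Nat.card A := by
        have h1 := card_map_mul_card_ker π A'
        rw [hkerπ, card_subgroupOf hDA', hcardD, hcardA'] at h1
        exact h1
      have hcardBt : Nat.card Bt * p = Nat.card B := by
        have h1 := card_map_mul_card_ker π B
        rw [hkerπ, card_subgroupOf hDB, hcardD] at h1
        exact h1
      have hdisj' : ∀ C : Subgroup M, Disjoint N C → D ≤ C → Disjoint Nt (C.map π) := by
        intro C hdisjC hDC
        rw [Subgroup.disjoint_def]
        rintro w ⟨nn, hn, rfl⟩ ⟨a, ha, hna⟩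
        obtain ⟨z, hz, hza⟩ := (QuotientGroup.mk'_eq_mk' D).mp hna
        have h1 : nn ∈ C := by rw [← hza]; exact C.mul_mem ha (hDC hz)
        have h2 : nn = 1 := Subgroup.disjoint_def.mp hdisjC hn h1
        rw [h2, map_one]
      have hcomplAt : Nt.IsComplement' At := by
        apply Subgroup.isComplement'_of_card_mul_and_disjoint
        · apply Nat.eq_of_mul_eq_mul_right hp_prime.pos
          calc Nat.card Nt * Nat.card At * p = Nat.card N * (Nat.card At * p) := by
                rw [hcardNt]; ring
            _ = Nat.card N * Nat.card A := by rw [hcardAt]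
            _ = Nat.card M := hA.card_mul
            _ = Nat.card (M ⧸ D) * p := hcardMbar.symm
        · exact hdisj' A' hdisjNA' hDA'
      have hcomplBt : Nt.IsComplement' Bt := by
        apply Subgroup.isComplement'_of_card_mul_and_disjoint
        · apply Nat.eq_of_mul_eq_mul_right hp_prime.pos
          calc Nat.card Nt * Nat.card Bt * p = Nat.card N * (Nat.card Bt * p) := by
                rw [hcardNt]; ring
            _ = Nat.card N * Nat.card B := by rw [hcardBt]
            _ = Nat.card M := hB.card_mul
            _ = Nat.card (M ⧸ D) * p := hcardMbar.symm
        · exact hdisj' B hB.disjoint hDB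
      have hidxNt : Nt.index * p = N.index := by
        apply Nat.eq_of_mul_eq_mul_left hcardN_pos
        calc Nat.card N * (Nt.index * p) = (Nat.card Nt * Nt.index) * p := by
              rw [hcardNt]; ring
          _ = Nat.card (M ⧸ D) * p := by rw [Subgroup.card_mul_index]
          _ = Nat.card M := hcardMbar
          _ = Nat.card N * N.index := (Subgroup.card_mul_index N).symm
      have hcoNt : (Nat.card Nt).Coprime Nt.index := by
        rw [hcardNt]
        exact hco.coprime_dvd_right ⟨p, hidxNt.symm⟩
      have hle : N ≤ Nt.comap π := fun y hy => Subgroup.mem_comap.mpr (Subgroup.mem_map_of_mem π hy)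
      have hcycNt : IsCyclic ((M ⧸ D) ⧸ Nt) := by
        apply isCyclic_of_surjective (QuotientGroup.map N Nt π hle)
        intro q
        obtain ⟨y, rfl⟩ := QuotientGroup.mk'_surjective Nt q
        obtain ⟨m, rfl⟩ := QuotientGroup.mk'_surjective D y
        exact ⟨QuotientGroup.mk' N m, QuotientGroup.map_mk' N Nt π hle m⟩
      have hltM : Nat.card (M ⧸ D) < Nat.card M := by
        rw [← hcardMbar]
        have hpos : 0 < Nat.card (M ⧸ D) := Nat.card_pos
        have h2 := hp_prime.one_lt
        exact lt_of_lt_of_le (by omega : Nat.card (M ⧸ D) < Nat.card (M ⧸ D) * 2)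
          (Nat.mul_le_mul_left _ (by omega))
      obtain ⟨mbar, hmbar⟩ := ih (Nat.card (M ⧸ D)) (lt_of_lt_of_le hltM hcard) (M ⧸ D)
        le_rfl Nt At Bt hcomplAt hcomplBt hcoNt hcycNt
      obtain ⟨m, rfl⟩ := QuotientGroup.mk'_surjective D mbar
      have hmap : (MulAut.conj m • A').map π = B.map π := by
        rw [map_conj_smul]
        exact hmbar
      have hDle : D ≤ MulAut.conj m • A' := by
        rw [← Subgroup.Normal.conj_smul_eq_self m D]
        exact Subgroup.pointwise_smul_le_pointwise_smul_iff.mpr hDA'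
      have hfin : MulAut.conj m • A' = B := by
        have h1 := Subgroup.comap_map_eq π (MulAut.conj m • A')
        have h2 := Subgroup.comap_map_eq π B
        rw [hmap, hkerπ, sup_eq_left.mpr hDle] at h1
        rw [hkerπ, sup_eq_left.mpr hDB] at h2
        exact h1.symm.trans h2
      exact ⟨m * (x : M), by rw [← conj_conj_smul]; exact hfin⟩
    · -- normalizer is a proper subgroup
      set L := Subgroup.normalizer (D : Set M) with hLdef
      have hA'L : A' ≤ L := by
        intro a ha
        rw [Subgroup.mem_normalizer_iff]
        intro g
        have hsmul : MulAut.conj a • D = D := by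
          rw [show D = A' ⊓ K from hA'K.symm]
          rw [Subgroup.smul_inf, Subgroup.Normal.conj_smul_eq_self a K, conj_smul_self ha]
        constructor
        · intro hg
          rw [← hsmul]
          exact ⟨g, hg, rfl⟩
        · intro hg
          rw [← hsmul] at hg
          obtain ⟨y, hy, hy2⟩ := hg
          have : y = g := by
            have : a * y * a⁻¹ = a * g * a⁻¹ := hy2
            simpa [mul_left_cancel_iff, mul_right_cancel_iff] using this
          rwa [← this]
      have hBL : B ≤ L := by
        intro b hb
        rw [Subgroup.mem_normalizer_iff]
        intro g
        have hsmul : MulAut.conj b • D = D := by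
          rw [hDdef, Subgroup.smul_inf, Subgroup.Normal.conj_smul_eq_self b K, conj_smul_self hb]
        constructor
        · intro hg
          rw [← hsmul]
          exact ⟨g, hg, rfl⟩
        · intro hg
          rw [← hsmul] at hg
          obtain ⟨y, hy, hy2⟩ := hg
          have : y = g := by
            have : b * y * b⁻¹ = b * g * b⁻¹ := hy2
            simpa [mul_left_cancel_iff, mul_right_cancel_iff] using this
          rwa [← this]
      set N₁ := N.subgroupOf L with hN₁
      set A₁ := A'.subgroupOf L with hA₁
      set B₁ := B.subgroupOf L with hB₁
      haveI hN₁norm : N₁.Normal := Subgroup.Normal.subgroupOf hNnorm L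
      -- complements downstairs
      have hdown : ∀ C : Subgroup M, C ≤ L → Disjoint N C → N.IsComplement' C →
          N₁.IsComplement' (C.subgroupOf L) := by
        intro C hCL hdisjC hcompl
        constructor
        · -- injective
          have hdisj₁ : Disjoint N₁ (C.subgroupOf L) := by
            rw [Subgroup.disjoint_def]
            intro y hy1 hy2
            have : (y : M) = 1 := Subgroup.disjoint_def.mp hdisjC hy1 hy2
            exact Subtype.ext this
          exact Subgroup.mul_injective_of_disjoint hdisj₁
        · -- surjective
          intro l
          obtain ⟨nn, hn, a, ha, hna⟩ := exists_decomp hcompl (l : M)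
          have haL : a ∈ L := hCL ha
          have hnL : nn ∈ L := by
            have h3 : nn = (l : M) * a⁻¹ := by rw [← hna]; group
            rw [h3]
            exact L.mul_mem l.2 (L.inv_mem haL)
          refine ⟨⟨⟨⟨nn, hnL⟩, by simpa [hN₁, Subgroup.mem_subgroupOf] using hn⟩,
            ⟨⟨a, haL⟩, by simpa [Subgroup.mem_subgroupOf] using ha⟩⟩, ?_⟩
          exact Subtype.ext hna
      have hcomplA₁ : N₁.IsComplement' A₁ := hdown A' hA'L hdisjNA' hA'compl
      have hcomplB₁ : N₁.IsComplement' B₁ := hdown B hBL hB.disjoint hB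
      -- coprimality
      have hcardN₁dvd : Nat.card N₁ ∣ Nat.card N := by
        rw [hN₁, ← Subgroup.inf_subgroupOf_right N L, card_subgroupOf (inf_le_right : N ⊓ L ≤ L)]
        exact Subgroup.card_dvd_of_le inf_le_left
      have hidxN₁ : N₁.index = N.index := by
        rw [hcomplA₁.symm.index_eq_card, hA₁, card_subgroupOf hA'L, hcardA',
          ← hA.symm.index_eq_card]
      have hcoN₁ : (Nat.card N₁).Coprime N₁.index := by
        rw [hidxN₁]
        exact hco.coprime_dvd_left hcardN₁dvd
      -- cyclicity
      haveI hcycA : IsCyclic A := by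
        apply isCyclic_of_surjective (MulEquiv.ofBijective _ (complement_mk'_bijective hA)).symm
        exact (MulEquiv.ofBijective _ (complement_mk'_bijective hA)).symm.surjective
      haveI hcycA' : IsCyclic A' := by
        apply isCyclic_of_surjective ((MulAut.conj (x : M)).subgroupMap A)
        exact ((MulAut.conj (x : M)).subgroupMap A).surjective
      haveI hcycA₁ : IsCyclic A₁ := by
        apply isCyclic_of_surjective (Subgroup.subgroupOfEquivOfLe hA'L).symm
        exact (Subgroup.subgroupOfEquivOfLe hA'L).symm.surjective
      have hcycL : IsCyclic (L ⧸ N₁) := by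
        apply isCyclic_of_surjective ((QuotientGroup.mk' N₁).comp A₁.subtype)
        exact (complement_mk'_bijective hcomplA₁).2
      -- cardinality decrease
      have hltL : Nat.card L < Nat.card M := card_lt_of_ne_top hDnormal
      obtain ⟨m₁, hm₁⟩ := ih (Nat.card L) (lt_of_lt_of_le hltL hcard) L le_rfl
        N₁ A₁ B₁ hcomplA₁ hcomplB₁ hcoN₁ hcycL
      rw [hA₁, Subgroup.conj_smul_subgroupOf hA'L m₁] at hm₁
      have hfin : MulAut.conj (m₁ : M) • A' = B :=
        subgroupOf_injOn (Subgroup.conj_smul_le_of_le hA'L m₁) hBL hm₁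
      exact ⟨(m₁ : M) * (x : M), by rw [← conj_conj_smul]; exact hfin⟩



section AutRestrict
variable {G : Type*} [Group G]

def autRestrict (N : Subgroup G) : MulAction.stabilizer (MulAut G) N →* MulAut N where
  toFun e :=
    { toFun := fun n => ⟨(e : MulAut G) n, by
        have he : (e : MulAut G) • N = N := e.2
        have h2 := Subgroup.smul_mem_pointwise_smul _ (e : MulAut G) N n.2
        rwa [he] at h2⟩
      invFun := fun n => ⟨(e : MulAut G)⁻¹ n, by
        have he : ((e : MulAut G)⁻¹) • N = N := by
          rw [inv_smul_eq_iff, e.2]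
        have h2 := Subgroup.smul_mem_pointwise_smul _ ((e : MulAut G)⁻¹) N n.2
        rwa [he] at h2⟩
      left_inv := fun n => Subtype.ext (by simp)
      right_inv := fun n => Subtype.ext (by simp)
      map_mul' := fun a b => Subtype.ext (by simp) }
  map_one' := by
    apply MulEquiv.ext
    intro n
    exact Subtype.ext (by simp)
  map_mul' e f := by
    apply MulEquiv.ext
    intro n
    exact Subtype.ext (by simp)

@[simp] lemma autRestrict_apply_coe (N : Subgroup G) (e : MulAction.stabilizer (MulAut G) N)
    (n : N) : ((autRestrict N e n : N) : G) = (e : MulAut G) n := rfl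

end AutRestrict

section Fix
variable {G : Type u} [Group G] [Finite G]

theorem fix_decomp {N : Subgroup G} (hN : N.Normal) {α : MulAut G}
    (hinv : α • N = N) (hco : Nat.Coprime (orderOf α) (Nat.card N)) {g : G}
    (hg : g⁻¹ * α g ∈ N) : ∃ c nn, α c = c ∧ nn ∈ N ∧ g = c * nn := by
  haveI := hN
  haveI : Finite (MulAut G) := Finite.of_injective (fun e => (e : G → G))
    (fun e f h => by ext x; exact congrFun h x)
  set C : Subgroup (MulAut G) := Subgroup.zpowers α with hC
  have hCst : C ≤ MulAction.stabilizer (MulAut G) N :=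
    Subgroup.zpowers_le.mpr (MulAction.mem_stabilizer_iff.mpr hinv)
  set ι : C →* MulAut N := (autRestrict N).comp (Subgroup.inclusion hCst) with hι
  have hι_coe : ∀ (c : C) (n : N), ((ι c n : N) : G) = (c : MulAut G) (n : G) := fun c n => rfl
  set M := SemidirectProduct N C ι with hM
  set αh : C := ⟨α, Subgroup.mem_zpowers α⟩ with hαh
  set r := orderOf α with hr
  have hordαh : orderOf αh = r := (orderOf_injective C.subtype Subtype.coe_injective αh).symm
  have hcardC : Nat.card C = r := Nat.card_zpowers α
  haveI : Finite M := by
    have e : M ≃ N × C := ⟨fun m => (m.left, m.right), fun p => ⟨p.1, p.2⟩,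
      fun m => rfl, fun p => rfl⟩
    exact Finite.of_equiv _ e.symm
  have hcardM : Nat.card M = Nat.card N * r := by
    have e : M ≃ N × C := ⟨fun m => (m.left, m.right), fun p => ⟨p.1, p.2⟩,
      fun m => rfl, fun p => rfl⟩
    rw [Nat.card_congr e, Nat.card_prod, hcardC]
  set Ns : Subgroup M := MonoidHom.ker SemidirectProduct.rightHom with hNs
  have hmemNs : ∀ m : M, m ∈ Ns ↔ m.right = 1 := fun m => Iff.rfl
  haveI hNsnorm : Ns.Normal := MonoidHom.normal_ker _
  have hcardNs : Nat.card Ns = Nat.card N := by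
    have hrange := SemidirectProduct.range_inl_eq_ker_rightHom (φ := ι)
    rw [hNs, ← hrange]
    exact Nat.card_congr (MonoidHom.ofInjective SemidirectProduct.inl_injective).symm.toEquiv
  set a0 : M := SemidirectProduct.inr αh with ha0
  have horda0 : orderOf a0 = r := by
    rw [← hordαh]
    exact orderOf_injective SemidirectProduct.inr SemidirectProduct.inr_injective αh
  set As : Subgroup M := Subgroup.zpowers a0 with hAs
  have hcardAs : Nat.card As = r := by rw [Nat.card_zpowers, horda0]
  -- the group C is commutative
  have hCcomm : ∀ c : C, c * αh = αh * c := by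
    rintro ⟨c, hc⟩
    obtain ⟨k, hk⟩ := hc
    apply Subtype.ext
    show c * α = α * c
    rw [← hk]
    exact (zpow_mul_comm α k 1).symm ▸ by group
  -- complement As
  have hdisjNsAs : Disjoint Ns As := by
    rw [Subgroup.disjoint_def]
    intro x hx1 hx2
    obtain ⟨k, hk⟩ := Subgroup.mem_zpowers_iff.mp hx2
    have h1 : SemidirectProduct.rightHom x = 1 := hx1
    rw [← hk, map_zpow] at h1
    have h2 : αh ^ k = 1 := by simpa [ha0] using h1
    have h3 : ((orderOf αh : ℤ)) ∣ k := orderOf_dvd_iff_zpow_eq_one.mpr h2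
    rw [← hk]
    apply orderOf_dvd_iff_zpow_eq_one.mp
    rw [horda0, ← hordαh]
    exact h3
  have hcomplAs : Ns.IsComplement' As :=
    Subgroup.isComplement'_of_card_mul_and_disjoint
      (by rw [hcardNs, hcardAs, hcardM]) hdisjNsAs
  -- the quotient is cyclic
  have hQcyc : IsCyclic (M ⧸ Ns) := by
    constructor
    refine ⟨QuotientGroup.mk' Ns a0, fun x => ?_⟩
    obtain ⟨m, rfl⟩ := QuotientGroup.mk'_surjective Ns x
    obtain ⟨k, hk⟩ := m.right.2
    have hc : αh ^ k = m.right := Subtype.ext (by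
      rw [← hk]
      simp [hαh])
    have hsplit : m = SemidirectProduct.inl m.left * SemidirectProduct.inr m.right :=
      (SemidirectProduct.inl_left_mul_inr_right m).symm
    refine ⟨k, ?_⟩
    show (QuotientGroup.mk' Ns) a0 ^ k = (QuotientGroup.mk' Ns) m
    rw [← map_zpow]
    have h6 : a0 ^ k = SemidirectProduct.inr m.right := by
      rw [ha0, ← map_zpow, hc]
    rw [h6]
    conv_rhs => rw [hsplit]
    rw [map_mul]
    have hinlker : QuotientGroup.mk' Ns (SemidirectProduct.inl m.left) = 1 := by
      rw [QuotientGroup.mk'_apply, QuotientGroup.eq_one_iff]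
      show SemidirectProduct.rightHom (SemidirectProduct.inl m.left) = 1
      simp
    rw [hinlker, one_mul]
  -- coprimality
  have hcoNs : (Nat.card Ns).Coprime Ns.index := by
    rw [hcardNs, hcomplAs.symm.index_eq_card, hcardAs]
    exact hco.symm
  -- the conjugated complement Bs
  have hn0 : g * (α g)⁻¹ ∈ N := by
    have h2 := hN.conj_mem _ (N.inv_mem hg) g
    have h3 : g * (g⁻¹ * α g)⁻¹ * g⁻¹ = g * (α g)⁻¹ := by group
    rwa [h3] at h2
  set n0 : N := ⟨g * (α g)⁻¹, hn0⟩ with hn0def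
  set β : M := ⟨n0, αh⟩ with hβdef
  have hβpow : ∀ k : ℕ, ((β ^ k).left : G) = g * ((α ^ k) g)⁻¹ ∧ (β ^ k).right = αh ^ k := by
    intro k
    induction k with
    | zero => constructor <;> simp
    | succ k ih =>
      have hL : (β ^ (k+1)).left = (β ^ k).left * ι ((β ^ k).right) n0 := by
        rw [pow_succ, SemidirectProduct.mul_left]
      have hR : (β ^ (k+1)).right = αh ^ (k+1) := by
        rw [pow_succ, SemidirectProduct.mul_right, ih.2, pow_succ]
      refine ⟨?_, hR⟩
      rw [hL, ih.2]
      push_cast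
      rw [ih.1, hι_coe]
      have hcoe : ((αh ^ k : C) : MulAut G) = α ^ k := by norm_cast
      rw [hcoe]
      show g * ((α ^ k) g)⁻¹ * (α ^ k) (g * (α g)⁻¹) = g * ((α ^ (k+1)) g)⁻¹
      rw [map_mul, map_inv]
      have : (α ^ k) (α g) = (α ^ (k+1)) g := by
        rw [pow_succ]
        rfl
      rw [this]
      group
  have hβr : β ^ r = 1 := by
    have h1 := hβpow r
    have hα : α ^ r = 1 := pow_orderOf_eq_one α
    have hαh2 : αh ^ r = 1 := by rw [← hordαh]; exact pow_orderOf_eq_one αh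
    apply SemidirectProduct.ext
    · apply Subtype.ext
      rw [h1.1, hα]
      simp
    · rw [h1.2, hαh2]
      rfl

  have hordβ : orderOf β = r := by
    apply Nat.dvd_antisymm (orderOf_dvd_of_pow_eq_one hβr)
    rw [← hordαh]
    apply orderOf_dvd_of_pow_eq_one
    have h1 := (hβpow (orderOf β)).2
    rw [pow_orderOf_eq_one β] at h1
    exact h1.symm
  set Bs : Subgroup M := Subgroup.zpowers β with hBs
  have hcardBs : Nat.card Bs = r := by rw [Nat.card_zpowers, hordβ]
  have hrightβ : SemidirectProduct.rightHom β = αh := rfl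
  have hdisjNsBs : Disjoint Ns Bs := by
    rw [Subgroup.disjoint_def]
    intro x hx1 hx2
    obtain ⟨k, hk⟩ := Subgroup.mem_zpowers_iff.mp hx2
    have h1 : SemidirectProduct.rightHom x = 1 := hx1
    rw [← hk, map_zpow, hrightβ] at h1
    have h3 : ((orderOf αh : ℤ)) ∣ k := orderOf_dvd_iff_zpow_eq_one.mpr h1
    rw [← hk]
    apply orderOf_dvd_iff_zpow_eq_one.mp
    rw [hordβ, ← hordαh]
    exact h3
  have hcomplBs : Ns.IsComplement' Bs :=
    Subgroup.isComplement'_of_card_mul_and_disjoint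
      (by rw [hcardNs, hcardBs, hcardM]) hdisjNsBs
  -- apply the conjugacy theorem
  obtain ⟨m, hm⟩ := conj_of_complement (Nat.card M) M le_rfl Ns As Bs
    hcomplAs hcomplBs hcoNs hQcyc
  -- m * a0 * m⁻¹ is a power of β
  have hconjmem : m * a0 * m⁻¹ ∈ Bs := by
    rw [← hm]
    exact ⟨a0, Subgroup.mem_zpowers a0, rfl⟩
  obtain ⟨k, hk⟩ := Subgroup.mem_zpowers_iff.mp hconjmem
  -- pass to the cyclic quotient to show the power is β itself
  have hQcomm : ∀ x y : M ⧸ Ns, x * y = y * x := by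
    letI := hQcyc.commGroup
    exact fun x y => mul_comm x y
  set π := QuotientGroup.mk' Ns with hπ
  have hπβ : π β = π a0 := by
    rw [QuotientGroup.mk'_eq_mk']
    refine ⟨β⁻¹ * a0, ?_, by rw [mul_inv_cancel_left]⟩
    show SemidirectProduct.rightHom (β⁻¹ * a0) = 1
    rw [map_mul, map_inv, hrightβ, ha0, SemidirectProduct.rightHom_inr]
    simp
  have hπa0ord : orderOf (π a0) = r := by
    apply Nat.dvd_antisymm
    · apply orderOf_dvd_of_pow_eq_one
      rw [← map_pow]
      have : a0 ^ r = 1 := by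
        apply orderOf_dvd_iff_pow_eq_one.mp
        rw [horda0]
      rw [this, map_one]
    · rw [← hordαh]
      apply orderOf_dvd_of_pow_eq_one
      have h1 : π (a0 ^ orderOf (π a0)) = 1 := by
        rw [map_pow, pow_orderOf_eq_one]
      have h2 : a0 ^ orderOf (π a0) ∈ Ns := (QuotientGroup.eq_one_iff _).mp h1
      have h3 : SemidirectProduct.rightHom (a0 ^ orderOf (π a0)) = 1 := h2
      rw [map_pow] at h3
      simpa [ha0] using h3
  have hka : (π a0) ^ k = π a0 := by
    have h1 : π (β ^ k) = π (m * a0 * m⁻¹) := by rw [hk]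
    rw [map_zpow, hπβ, map_mul, map_mul, map_inv] at h1
    rw [h1, hQcomm (π m) (π a0)]
    group
  have hdvd : (r : ℤ) ∣ (k - 1) := by
    rw [← hπa0ord]
    apply orderOf_dvd_iff_zpow_eq_one.mpr
    rw [zpow_sub, zpow_one, hka]
    simp
  have hββ : β ^ k = β := by
    have h1 : β ^ (k - 1) = 1 := by
      apply orderOf_dvd_iff_zpow_eq_one.mp
      rw [hordβ]
      exact hdvd
    calc β ^ k = β ^ (k - 1) * β ^ (1 : ℤ) := by rw [← zpow_add]; norm_num
      _ = β := by rw [h1, one_mul, zpow_one]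
  have hconj : m * a0 * m⁻¹ = β := by rw [← hk, hββ]
  -- extract components
  set u : N := m.left with hu
  set c : C := m.right with hc
  have hcalm : (c : MulAut G) * α * (c : MulAut G)⁻¹ = α := by
    have h1 := hCcomm c
    have h2 : (c : MulAut G) * α = α * (c : MulAut G) := congrArg Subtype.val h1
    rw [h2]
    group
  have hleft : ((m * a0 * m⁻¹).left : G) = (u : G) * (α (u : G))⁻¹ := by
    have h1 : (m * a0).left = u := by
      rw [SemidirectProduct.mul_left, ha0, SemidirectProduct.left_inr, map_one, mul_one]
    have h2 : (m * a0).right = c * αh := by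
      rw [SemidirectProduct.mul_right, ha0, SemidirectProduct.right_inr]
    have h3 : (m * a0 * m⁻¹).left = u * ι ((m * a0).right) (m⁻¹.left) := by
      rw [SemidirectProduct.mul_left, h1]
    rw [h3, h2, SemidirectProduct.inv_left]
    push_cast
    rw [hι_coe, hι_coe]
    have hcoe1 : ((c * αh : C) : MulAut G) = (c : MulAut G) * α := rfl
    have hcoe2 : ((c⁻¹ : C) : MulAut G) = (c : MulAut G)⁻¹ := rfl
    rw [hcoe1, hcoe2]
    have h4 : ((c : MulAut G) * α) ((c : MulAut G)⁻¹ ((u⁻¹ : N) : G)) =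
        (((c : MulAut G) * α) * (c : MulAut G)⁻¹) ((u⁻¹ : N) : G) := rfl
    rw [h4, hcalm]
    have h5 : ((u⁻¹ : N) : G) = ((u : N) : G)⁻¹ := rfl
    rw [h5, map_inv]
  have hβleft : ((β.left : N) : G) = g * (α g)⁻¹ := rfl
  have hkey : (u : G) * (α (u : G))⁻¹ = g * (α g)⁻¹ := by
    rw [← hleft, hconj, hβleft]
  -- conclude
  have hfix : α ((u : G)⁻¹ * g) = (u : G)⁻¹ * g := by
    have h5 : (α (u : G))⁻¹ = (u : G)⁻¹ * (g * (α g)⁻¹) := by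
      rw [← hkey]; group
    rw [map_mul, map_inv, h5]
    group
  refine ⟨(u : G)⁻¹ * g, ((u : G)⁻¹ * g)⁻¹ * (u : G) * ((u : G)⁻¹ * g),
    hfix, hN.conj_mem' _ u.2 _, by group⟩
end Fix

/-- The subgroup `[G, A]` generated by all `g⁻¹ • (a • g)`. -/
def commSubAll {A G : Type*} [Group A] [Group G] (φ : A →* MulAut G) : Subgroup G :=
  Subgroup.closure {x : G | ∃ g : G, ∃ a : A, x = g⁻¹ * φ a g}

theorem comm_comm_eq_comm {A G : Type*} [Group A] [Group G] [Finite A] [Finite G]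
    (φ : A →* MulAut G) (hco : Nat.Coprime (Nat.card A) (Nat.card G)) :
    Subgroup.closure {x : G | ∃ g ∈ commSubAll φ, ∃ a : A, x = g⁻¹ * φ a g}
      = commSubAll φ := by
  set N := commSubAll φ with hNdef
  have hgen : ∀ (g : G) (a : A), g⁻¹ * φ a g ∈ N := fun g a =>
    Subgroup.subset_closure ⟨g, a, rfl⟩
  -- N is normal
  have hkey : ∀ h : G, N.map (MulAut.conj h).toMonoidHom ≤ N := by
    intro h
    rw [hNdef, commSubAll, MonoidHom.map_closure]
    apply Subgroup.closure_le _ |>.mpr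
    rintro x ⟨y, ⟨g, a, rfl⟩, rfl⟩
    show h * (g⁻¹ * φ a g) * h⁻¹ ∈ N
    have hid : h * (g⁻¹ * φ a g) * h⁻¹ =
        ((g * h⁻¹)⁻¹ * φ a (g * h⁻¹)) * ((h⁻¹)⁻¹ * φ a h⁻¹)⁻¹ := by
      rw [map_mul]
      group
    rw [hid]
    exact N.mul_mem (hgen _ a) (N.inv_mem (hgen _ a))
  have hNnorm : N.Normal := ⟨fun nn hnn h => hkey h ⟨nn, hnn, rfl⟩⟩
  -- N is invariant
  have hinvmap : ∀ a : A, N.map (φ a).toMonoidHom ≤ N := by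
    intro a
    rw [hNdef, commSubAll, MonoidHom.map_closure]
    apply Subgroup.closure_le _ |>.mpr
    rintro x ⟨y, ⟨g, b, rfl⟩, rfl⟩
    show (φ a) (g⁻¹ * φ b g) ∈ N
    have hid : (φ a) (g⁻¹ * φ b g) = (φ a g)⁻¹ * (φ (a * b * a⁻¹)) (φ a g) := by
      rw [map_mul, map_inv]
      have h2 : (φ (a * b * a⁻¹)) (φ a g) = φ (a * b) g := by
        rw [← MulAut.mul_apply, ← map_mul]
        congr 1
        group
      rw [h2, map_mul, MulAut.mul_apply]
    rw [hid]
    exact hgen (φ a g) (a * b * a⁻¹)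
  have hinv : ∀ a : A, φ a • N = N := by
    intro a
    have hle : φ a • N ≤ N := hinvmap a
    apply Subgroup.eq_of_le_of_card_ge hle
    have h3 : Nat.card (φ a • N : Subgroup G) = Nat.card N :=
      Nat.card_congr ((φ a).subgroupMap N).toEquiv.symm
    rw [h3]
  have hcop : ∀ a : A, Nat.Coprime (orderOf (φ a)) (Nat.card N) := by
    intro a
    have h1 : orderOf (φ a) ∣ Nat.card A :=
      dvd_trans (orderOf_map_dvd φ a) (orderOf_dvd_natCard a)
    have h2 : Nat.card N ∣ Nat.card G := Subgroup.card_subgroup_dvd_card N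
    exact (Nat.Coprime.coprime_dvd_left h1 (hco.coprime_dvd_right h2))
  -- conclude
  apply le_antisymm
  · apply Subgroup.closure_le _ |>.mpr
    rintro x ⟨g, hgN, a, rfl⟩
    exact hgen g a
  · rw [hNdef, commSubAll]
    apply Subgroup.closure_le _ |>.mpr
    rintro x ⟨g, a, rfl⟩
    obtain ⟨c, nn, hc, hnn, rfl⟩ := fix_decomp hNnorm (hinv a) (hcop a) (hgen g a)
    have hid : (c * nn)⁻¹ * φ a (c * nn) = nn⁻¹ * φ a nn := by
      rw [map_mul, hc]
      group
    rw [hid]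
    exact Subgroup.subset_closure ⟨nn, hnn, a, rfl⟩
end

section
/- Let p and q be distinct primes, P a finite p-group, and A an elementary abelian group of order q² acting by automorphisms on P such that |C_P(a)| ≤ m for every nontrivial a ∈ A. Then |P| ≤ m^{q+1}. -/
open Subgroup

/-- The subgroup of fixed points of a single automorphism `φ a`. -/
def fixedSub {A G : Type*} [Group A] [Group G] (φ : A →* MulAut G) (a : A) : Subgroup G where
  carrier := {g : G | φ a g = g}
  one_mem' := map_one _
  mul_mem' := by
    intro x y hx hy
    simp only [Set.mem_setOf_eq, map_mul] at *
    rw [hx, hy]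
  inv_mem' := by
    intro x hx
    simp only [Set.mem_setOf_eq, map_inv] at *
    rw [hx]

/-- Fixed points of a whole subgroup of `A`. -/
def fixedOf {A G : Type*} [Group A] [Group G] (φ : A →* MulAut G) (H : Subgroup A) :
    Subgroup G where
  carrier := {g : G | ∀ a ∈ H, φ a g = g}
  one_mem' := fun a _ => map_one _
  mul_mem' := by
    intro x y hx hy a ha
    simp only [Set.mem_setOf_eq, map_mul] at *
    rw [hx a ha, hy a ha]
  inv_mem' := by
    intro x hx a ha
    simp only [Set.mem_setOf_eq, map_inv] at *
    rw [hx a ha]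

lemma mem_fixedOf {A G : Type*} [Group A] [Group G] (φ : A →* MulAut G) (H : Subgroup A)
    (g : G) : g ∈ fixedOf φ H ↔ ∀ a ∈ H, φ a g = g := Iff.rfl

/-- if `f` fixes `x`, all integer powers of `f` fix `x`. -/
lemma zpow_fix {G : Type*} [Group G] (f : MulAut G) (x : G) (h : f x = x) (n : ℤ) :
    (f ^ n) x = x := by
  have hf : f ∈ MulAction.stabilizer (MulAut G) x := h
  exact (MulAction.stabilizer (MulAut G) x).zpow_mem hf n

lemma fixedSub_le_fixedOf {A G : Type*} [Group A] [Group G] (φ : A →* MulAut G) (a : A) :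
    fixedSub φ a ≤ fixedOf φ (zpowers a) := by
  intro g hg b hb
  obtain ⟨n, rfl⟩ := mem_zpowers_iff.mp hb
  rw [map_zpow]
  exact zpow_fix (φ a) g hg n

lemma fixedOf_le_fixedSub {A G : Type*} [Group A] [Group G] (φ : A →* MulAut G)
    {H : Subgroup A} {a : A} (ha : a ∈ H) : fixedOf φ H ≤ fixedSub φ a :=
  fun _ hg => hg a ha

/-- Restrict an action by automorphisms to an invariant subgroup. -/
def restrictHom {A G : Type*} [Group A] [Group G] (φ : A →* MulAut G) (K : Subgroup G)
    (hK : ∀ (a : A), ∀ x ∈ K, φ a x ∈ K) : A →* MulAut ↥K :=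
  MonoidHom.mk'
    (fun a =>
      { toFun := fun x => ⟨φ a x, hK a x x.2⟩
        invFun := fun x => ⟨φ a⁻¹ x, hK a⁻¹ x x.2⟩
        left_inv := fun x => by
          ext
          simp only
          rw [← MulAut.mul_apply, ← map_mul, inv_mul_cancel, map_one, MulAut.one_apply]
        right_inv := fun x => by
          ext
          simp only
          rw [← MulAut.mul_apply, ← map_mul, mul_inv_cancel, map_one, MulAut.one_apply]
        map_mul' := fun x y => by
          ext
          show φ a ((x : G) * y) = φ a x * φ a y
          rw [map_mul] })
    (fun a b => by
      ext x
      show φ (a * b) (x : G) = φ a (φ b (x : G))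
      rw [map_mul, MulAut.mul_apply])

@[simp] lemma restrictHom_apply {A G : Type*} [Group A] [Group G] (φ : A →* MulAut G)
    (K : Subgroup G) (hK) (a : A) (x : ↥K) :
    ((restrictHom φ K hK a x : ↥K) : G) = φ a x := rfl

/-- Push an action by automorphisms to the quotient by an invariant normal subgroup. -/
def quotHom {A G : Type*} [Group A] [Group G] (φ : A →* MulAut G) (K : Subgroup G) [K.Normal]
    (hK : ∀ a : A, K.map (φ a : G ≃* G) = K) : A →* MulAut (G ⧸ K) :=
  MonoidHom.mk'
    (fun a => QuotientGroup.congr K K (φ a) (hK a))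
    (fun a b => by
      ext x
      induction x using QuotientGroup.induction_on with
      | H x =>
        simp only [QuotientGroup.congr_mk, MulAut.mul_apply, map_mul, QuotientGroup.congr_mk])

@[simp] lemma quotHom_mk {A G : Type*} [Group A] [Group G] (φ : A →* MulAut G) (K : Subgroup G)
    [K.Normal] (hK) (a : A) (x : G) :
    quotHom φ K hK a (QuotientGroup.mk x) = QuotientGroup.mk (φ a x) := rfl

/-- Coprime lifting of fixed points along a quotient. -/
lemma exists_lift_fixed {q p : ℕ} (hq : q.Prime) (hp : p.Prime) (hpq : p ≠ q)
    {A P : Type*} [Group A] [Group P] [Finite P]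
    (hP : IsPGroup p P) (φ : A →* MulAut P) (K : Subgroup P) [K.Normal]
    (hK : ∀ a : A, K.map (φ a : P ≃* P) = K)
    {a : A} (ha : orderOf a = q) (y : P ⧸ K)
    (hy : quotHom φ K hK a y = y) :
    ∃ g : P, g ∈ fixedSub φ a ∧ QuotientGroup.mk g = y := by
  obtain ⟨x₀, rfl⟩ := QuotientGroup.mk_surjective y
  set H := zpowers a with hHdef
  have hfixq : ∀ h ∈ H, (quotHom φ K hK) h (QuotientGroup.mk x₀) = QuotientGroup.mk x₀ := by
    intro h hh
    obtain ⟨n, rfl⟩ := mem_zpowers_iff.mp hh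
    rw [map_zpow]
    exact zpow_fix _ _ hy n
  set X : Set P := {y' : P | QuotientGroup.mk y' = (QuotientGroup.mk x₀ : P ⧸ K)} with hXdef
  letI : MulAction H X :=
    { smul := fun h y' => ⟨φ h y', by
        show QuotientGroup.mk ((φ (h : A)) (y' : P)) = QuotientGroup.mk x₀
        have h1 : QuotientGroup.mk ((φ (h : A)) (y' : P))
            = quotHom φ K hK h (QuotientGroup.mk (y' : P)) := rfl
        rw [h1, y'.2, hfixq h h.2]⟩
      one_smul := fun y' => Subtype.ext (by
        show φ ((1 : H) : A) (y' : P) = y'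
        rw [OneMemClass.coe_one, map_one, MulAut.one_apply])
      mul_smul := fun h1 h2 y' => Subtype.ext (by
        show φ ((h1 * h2 : H) : A) (y' : P) = φ (h1 : A) (φ (h2 : A) (y' : P))
        rw [Subgroup.coe_mul, map_mul, MulAut.mul_apply]) }
  haveI := Fact.mk hq
  haveI := Fact.mk hp
  have hH : IsPGroup q H := IsPGroup.of_card (n := 1) (by rw [Nat.card_zpowers, ha, pow_one])
  have hmod := hH.card_modEq_card_fixedPoints X
  have e : K ≃ X :=
    { toFun := fun k => ⟨x₀ * k, by
        show _ = _
        rw [QuotientGroup.eq]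
        simpa using k.2⟩
      invFun := fun y' => ⟨x₀⁻¹ * y', QuotientGroup.eq.mp y'.2.symm⟩
      left_inv := fun k => Subtype.ext (by simp)
      right_inv := fun y' => Subtype.ext (by simp) }
  have hcardX : Nat.card X = Nat.card K := (Nat.card_congr e).symm
  have hndvd : ¬ q ∣ Nat.card X := by
    obtain ⟨n, hn⟩ := IsPGroup.iff_card.mp (hP.to_subgroup K)
    rw [hcardX, hn]
    intro hdvd
    exact hpq ((Nat.prime_dvd_prime_iff_eq hq hp).mp (hq.dvd_of_dvd_pow hdvd)).symm
  have hne : Nat.card (MulAction.fixedPoints H X) ≠ 0 := by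
    intro h0
    rw [h0] at hmod
    exact hndvd ((Nat.modEq_zero_iff_dvd).mp hmod)
  have hnonempty : Nonempty (MulAction.fixedPoints H X) := by
    rcases Nat.card_eq_zero.not.mp hne with h
    push_neg at h
    exact h.1
  obtain ⟨⟨⟨g, hgX⟩, hgfix⟩⟩ := hnonempty
  refine ⟨g, ?_, hgX⟩
  have := hgfix (⟨a, mem_zpowers a⟩ : H)
  exact congrArg Subtype.val this

lemma eq_zpowers_of_mem {q : ℕ} (hq : q.Prime) {A : Type*} [Group A] [Finite A]
    {H : Subgroup A} (hH : Nat.card H = q) {a : A} (haH : a ∈ H) (ha : a ≠ 1) :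
    H = zpowers a := by
  have h1 : orderOf a ∣ q := by
    rw [← hH, ← Subgroup.orderOf_mk a haH]
    exact orderOf_dvd_natCard _
  have h2 : orderOf a = q := by
    rcases (Nat.Prime.eq_one_or_self_of_dvd hq _ h1) with h | h
    · exact absurd (orderOf_eq_one_iff.mp h) ha
    · exact h
  exact (Subgroup.eq_of_le_of_card_ge (zpowers_le.mpr haH)
    (by rw [Nat.card_zpowers, h2, hH])).symm

lemma exists_nontrivial_elt {q : ℕ} (hq : q.Prime) {A : Type*} [Group A] [Finite A]
    {H : Subgroup A} (hH : Nat.card H = q) : ∃ a ∈ H, a ≠ 1 ∧ orderOf a = q := by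
  have : Nontrivial H := by
    apply Finite.one_lt_card_iff_nontrivial.mp
    rw [hH]; exact hq.one_lt
  obtain ⟨⟨a, haH⟩, hne⟩ := exists_ne (1 : H)
  have ha : a ≠ 1 := fun h => hne (Subtype.ext h)
  refine ⟨a, haH, ha, ?_⟩
  have := eq_zpowers_of_mem hq hH haH ha
  rw [← Nat.card_zpowers, ← this, hH]

lemma abelian_decomp {q p : ℕ} (hq : q.Prime) (hp : p.Prime) (hpq : p ≠ q)
    {A : Type*} [CommGroup A] [Finite A]
    (L : List (Subgroup A)) (hnd : L.Nodup) (hlen : L.length = q + 1)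
    (hLq : ∀ H ∈ L, Nat.card H = q) (hcov : ∀ a : A, a ≠ 1 → zpowers a ∈ L)
    {Q : Type*} [CommGroup Q] [Finite Q] (hQ : IsPGroup p Q) (ψ : A →* MulAut Q) (z : Q) :
    ∃ w : Subgroup A → Q, (∀ H ∈ L, w H ∈ fixedOf ψ H) ∧ z = (L.map w).prod := by
  classical
  haveI := Fintype.ofFinite A
  by_cases hz1 : z = 1
  · refine ⟨fun _ => 1, fun H _ => one_mem _, ?_⟩
    subst hz1
    rw [List.map_const']
    simp
  set g : A → Q := fun a => ψ a z with hg
  set FH : Subgroup A → Finset A := fun H => Finset.univ.filter (· ∈ H) with hFH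
  have hmemFH : ∀ (H : Subgroup A) (a : A), a ∈ FH H ↔ a ∈ H := by
    intro H a; simp [hFH]
  set N : Subgroup A → Q := fun H => ∏ a ∈ FH H, g a with hN
  set NA : Q := ∏ a : A, g a with hNA
  have hgmul : ∀ b a : A, ψ b (g a) = g (b * a) := by
    intro b a
    rw [hg]
    simp only
    rw [← MulAut.mul_apply, ← map_mul]
  have himg : ∀ (s : Finset A) (b : A), ∏ a ∈ s.image (fun x => b * x), g a = ∏ a ∈ s, g (b * a) :=
    fun s b => Finset.prod_image (fun x _ y _ h => mul_left_cancel h)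
  have hNfix : ∀ (H : Subgroup A), ∀ b ∈ H, ψ b (N H) = N H := by
    intro H b hb
    rw [hN]
    simp only
    rw [map_prod]
    have h1 : ∀ a ∈ FH H, ψ b (g a) = g (b * a) := fun a _ => hgmul b a
    rw [Finset.prod_congr rfl h1, ← himg]
    congr 1
    ext y
    simp only [Finset.mem_image, hmemFH]
    constructor
    · rintro ⟨x, hx, rfl⟩; exact H.mul_mem hb hx
    · intro hy; exact ⟨b⁻¹ * y, H.mul_mem (H.inv_mem hb) hy, by group⟩
  have hNAfix : ∀ b : A, ψ b NA = NA := by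
    intro b
    rw [hNA, map_prod]
    have h1 : ∀ a ∈ Finset.univ, ψ b (g a) = g (b * a) := fun a _ => hgmul b a
    rw [Finset.prod_congr rfl h1, ← himg]
    congr 1
    ext y
    simp only [Finset.mem_image, Finset.mem_univ, iff_true]
    exact ⟨b⁻¹ * y, trivial, by group⟩
  set SL : Finset (Subgroup A) := L.toFinset with hSL
  have hSLmem : ∀ H, H ∈ SL ↔ H ∈ L := fun H => List.mem_toFinset
  have hSLcard : SL.card = q + 1 := by rw [hSL, List.toFinset_card_of_nodup hnd, hlen]
  have hg1 : g 1 = z := by rw [hg]; simp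
  set T : Finset A := Finset.univ.erase 1 with hT
  have hbiU : SL.biUnion (fun H => (FH H).erase 1) = T := by
    ext a
    simp only [Finset.mem_biUnion, Finset.mem_erase, hmemFH, hT, Finset.mem_univ, and_true]
    constructor
    · rintro ⟨H, _, ha1, _⟩; exact ha1
    · intro ha1
      exact ⟨zpowers a, (hSLmem _).mpr (hcov a ha1), ha1, mem_zpowers a⟩
  have hdisj : ∀ H1 ∈ SL, ∀ H2 ∈ SL, H1 ≠ H2 →
      Disjoint ((FH H1).erase 1) ((FH H2).erase 1) := by
    intro H1 h1 H2 h2 hne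
    rw [Finset.disjoint_left]
    intro a ha1 ha2
    rw [Finset.mem_erase, hmemFH] at ha1 ha2
    exact hne ((eq_zpowers_of_mem hq (hLq H1 ((hSLmem _).mp h1)) ha1.2 ha1.1).trans
      (eq_zpowers_of_mem hq (hLq H2 ((hSLmem _).mp h2)) ha2.2 ha2.1).symm)
  have hNsplit : ∀ H : Subgroup A, N H = z * ∏ a ∈ (FH H).erase 1, g a := by
    intro H
    rw [hN]
    simp only
    rw [← hg1]
    exact (Finset.mul_prod_erase (FH H) g ((hmemFH H 1).mpr H.one_mem)).symm
  set E : Q := ∏ a ∈ T, g a with hE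
  have hNAsplit : NA = z * E := by
    rw [hNA, hE, hT, ← hg1]
    exact (Finset.mul_prod_erase Finset.univ g (Finset.mem_univ 1)).symm
  have hprodN : SL.prod N = z ^ (q + 1) * E := by
    rw [Finset.prod_congr rfl (fun H _ => hNsplit H), Finset.prod_mul_distrib,
      Finset.prod_const, hSLcard, ← Finset.prod_biUnion hdisj, hbiU, hE]
  have hzq : z ^ q = SL.prod N * NA⁻¹ := by
    rw [hprodN, hNAsplit, pow_succ]
    group
  -- find k with z ^ (q * k) = z
  haveI := Fact.mk hp
  obtain ⟨j, hj⟩ := (IsPGroup.iff_card (p := p) (G := Q)).mp hQ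
  have hord : orderOf z ∣ p ^ j := by rw [← hj]; exact orderOf_dvd_natCard z
  have hcop : Nat.Coprime q (orderOf z) := by
    apply Nat.Coprime.coprime_dvd_right hord
    apply Nat.Coprime.pow_right
    rw [Nat.coprime_primes hq hp]
    exact fun h => hpq h.symm
  have hord1 : 1 < orderOf z := by
    have h0 : orderOf z ≠ 0 := (orderOf_pos z).ne'
    have h1 : orderOf z ≠ 1 := fun h => hz1 (orderOf_eq_one_iff.mp h)
    omega
  obtain ⟨k, -, hk⟩ := Nat.exists_mul_mod_eq_one_of_coprime hcop hord1
  have hzk : z ^ (q * k) = z := by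
    conv_rhs => rw [← pow_one z]
    rw [← hk, pow_mod_orderOf]
  -- assemble
  have hLne : L ≠ [] := by
    intro h; rw [h] at hlen; simp at hlen
  set H0 : Subgroup A := L.head hLne with hH0
  have hH0SL : H0 ∈ SL := (hSLmem _).mpr (L.head_mem hLne)
  set w : Subgroup A → Q := fun H => (N H) ^ k * (if H = H0 then (NA⁻¹) ^ k else 1) with hw
  refine ⟨w, ?_, ?_⟩
  · intro H hH
    rw [hw]
    apply mul_mem
    · apply pow_mem
      rw [mem_fixedOf]
      exact hNfix H
    · split
      · apply pow_mem
        apply inv_mem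
        rw [mem_fixedOf]
        exact fun a _ => hNAfix a
      · exact one_mem _
  · rw [← List.prod_toFinset w hnd, ← hSL, hw]
    rw [Finset.prod_mul_distrib, Finset.prod_pow, Finset.prod_ite_eq' SL H0
      (fun _ => (NA⁻¹) ^ k), if_pos hH0SL, ← mul_pow, ← hzq, ← pow_mul, hzk]

lemma list_prod_mul_central {α : Type*} {G : Type*} [Group G] (l : List α) (u v : α → G)
    (hu : ∀ i ∈ l, ∀ y : G, Commute (u i) y) :
    (l.map u).prod * (l.map v).prod = (l.map (fun i => u i * v i)).prod := by
  induction l with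
  | nil => simp
  | cons a t ih =>
    simp only [List.map_cons, List.prod_cons]
    have hU : Commute ((t.map u).prod) (v a) :=
      Commute.list_prod_left _ _ (by
        intro x hx
        obtain ⟨i, hi, rfl⟩ := List.mem_map.mp hx
        exact hu i (List.mem_cons_of_mem a hi) (v a))
    have ih' := ih (fun i hi => hu i (List.mem_cons_of_mem a hi))
    calc u a * (t.map u).prod * (v a * (t.map v).prod)
        = u a * ((t.map u).prod * v a) * (t.map v).prod := by group
      _ = u a * (v a * (t.map u).prod) * (t.map v).prod := by rw [hU.eq]
      _ = u a * v a * ((t.map u).prod * (t.map v).prod) := by group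
      _ = u a * v a * (t.map (fun i => u i * v i)).prod := by rw [ih']

open scoped IsMulCommutative in
universe u in
lemma key_decomp {q p : ℕ} (hq : q.Prime) (hp : p.Prime) (hpq : p ≠ q)
    {A : Type*} [CommGroup A] [Finite A]
    (L : List (Subgroup A)) (hnd : L.Nodup) (hlen : L.length = q + 1)
    (hLq : ∀ H ∈ L, Nat.card H = q) (hcov : ∀ a : A, a ≠ 1 → zpowers a ∈ L) :
    ∀ n : ℕ, ∀ (P : Type u) (_ : Group P) (_ : Finite P), Nat.card P = n →
      ∀ (_ : IsPGroup p P) (φ : A →* MulAut P) (x : P),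
        ∃ w : Subgroup A → P, (∀ H ∈ L, w H ∈ fixedOf φ H) ∧ x = (L.map w).prod := by
  intro n
  induction n using Nat.strong_induction_on with
  | _ n ih =>
  intro P instG instF hn hP φ x
  letI := instG
  letI := instF
  classical
  haveI := Fact.mk hp
  rcases subsingleton_or_nontrivial P with hss | hnt
  · refine ⟨fun _ => 1, fun H _ => one_mem _, ?_⟩
    have h1 : (L.map (fun _ => (1 : P))).prod = 1 := by
      rw [List.map_const']; simp
    rw [h1]
    exact Subsingleton.elim x 1
  · set Z : Subgroup P := Subgroup.center P with hZ
    have hmapZ : ∀ a : A, Z.map ((φ a : P ≃* P) : P →* P) = Z := fun a =>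
      Subgroup.characteristic_iff_map_eq.mp (Subgroup.centerCharacteristic) (φ a)
    set φ' := quotHom φ Z hmapZ with hφ'
    have hcardlt : Nat.card (P ⧸ Z) < n := by
      rw [← hn, Subgroup.card_eq_card_quotient_mul_card_subgroup Z]
      have h2 : 1 < Nat.card Z := by
        rw [Finite.one_lt_card_iff_nontrivial]
        exact hP.center_nontrivial
      have h3 : 0 < Nat.card (P ⧸ Z) := Nat.card_pos
      exact (Nat.lt_mul_iff_one_lt_right h3).mpr h2
    haveI hFQ : Finite (P ⧸ Z) := Quotient.finite _
    obtain ⟨wbar, hwbar, hprod⟩ :=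
      ih _ hcardlt (P ⧸ Z) _ hFQ rfl (hP.to_quotient Z) φ' (QuotientGroup.mk x)
    have hlift : ∀ H ∈ L, ∃ gH : P, gH ∈ fixedOf φ H ∧ QuotientGroup.mk gH = wbar H := by
      intro H hH
      obtain ⟨a, haH, ha1, haq⟩ := exists_nontrivial_elt hq (hLq H hH)
      have hy : φ' a (wbar H) = wbar H := hwbar H hH a haH
      obtain ⟨g, hgfix, hgmk⟩ := exists_lift_fixed hq hp hpq hP φ Z hmapZ haq (wbar H) hy
      refine ⟨g, ?_, hgmk⟩
      rw [eq_zpowers_of_mem hq (hLq H hH) haH ha1]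
      exact fixedSub_le_fixedOf φ a hgfix
    choose gfun hg1 hg2 using fun H => fun hH => hlift H hH
    set gf : Subgroup A → P := fun H => if hH : H ∈ L then gfun H hH else 1 with hgf
    set y : P := (L.map gf).prod with hy
    have hmky : (QuotientGroup.mk y : P ⧸ Z) = QuotientGroup.mk x := by
      have h4 : (QuotientGroup.mk' Z) y = (L.map ((QuotientGroup.mk' Z) ∘ gf)).prod := by
        rw [hy, map_list_prod, List.map_map]
      have h5 : L.map ((QuotientGroup.mk' Z) ∘ gf) = L.map wbar := by
        apply List.map_congr_left
        intro H hH
        show (QuotientGroup.mk' Z) (gf H) = wbar H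
        rw [hgf]
        simp only [dif_pos hH]
        exact hg2 H hH
      show (QuotientGroup.mk' Z) y = QuotientGroup.mk x
      rw [h4, h5, ← hprod]
    have hzmem : y⁻¹ * x ∈ Z := QuotientGroup.eq.mp hmky
    -- restrict the action to the center
    have hZsub : ∀ (a : A), ∀ v ∈ Z, φ a v ∈ Z := by
      intro a v hv
      have := Subgroup.mem_map_of_mem (f := ((φ a : P ≃* P) : P →* P)) hv
      rwa [hmapZ a] at this
    set ψ := restrictHom φ Z hZsub with hψ
    obtain ⟨wz, hwz1, hwz2⟩ := abelian_decomp hq hp hpq L hnd hlen hLq hcov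
      (hP.to_subgroup Z) ψ ⟨y⁻¹ * x, hzmem⟩
    have hzeq : y⁻¹ * x = (L.map (fun H => ((wz H : ↥Z) : P))).prod := by
      have h6 := congrArg (Subgroup.subtype Z) hwz2
      rwa [map_list_prod, List.map_map] at h6
    set w : Subgroup A → P := fun H => ((wz H : ↥Z) : P) * gf H with hw
    refine ⟨w, ?_, ?_⟩
    · intro H hH
      rw [hw]
      apply mul_mem
      · intro a haH
        have h7 := hwz1 H hH a haH
        exact congrArg Subtype.val h7
        
      · rw [hgf]
        simp only [dif_pos hH]
        exact hg1 H hH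
    · have hcomm : ∀ H ∈ L, ∀ v : P, Commute ((wz H : ↥Z) : P) v := by
        intro H _ v
        have h9 : ((wz H : ↥Z) : P) ∈ Subgroup.center P := (wz H : ↥Z).2
        exact (Subgroup.mem_center_iff.mp h9 v).symm
      have h8 : Commute y (y⁻¹ * x) := Subgroup.mem_center_iff.mp hzmem y
      calc x = y * (y⁻¹ * x) := by group
        _ = (y⁻¹ * x) * y := h8
        _ = (L.map (fun H => ((wz H : ↥Z) : P))).prod * (L.map gf).prod := by
              rw [← hzeq]
        _ = (L.map w).prod := list_prod_mul_central L _ gf hcomm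

lemma exists_L {q : ℕ} (hq : q.Prime) {A : Type*} [CommGroup A] [Finite A]
    (hcard : Nat.card A = q ^ 2) (hexp : ∀ a : A, a ^ q = 1) :
    ∃ L : List (Subgroup A), L.Nodup ∧ L.length = q + 1 ∧
      (∀ H ∈ L, Nat.card H = q) ∧ (∀ a : A, a ≠ 1 → zpowers a ∈ L) := by
  classical
  haveI := Fintype.ofFinite A
  haveI := Fintype.ofFinite (Subgroup A)
  have hordq : ∀ a : A, a ≠ 1 → orderOf a = q := by
    intro a ha
    have h1 : orderOf a ∣ q := orderOf_dvd_of_pow_eq_one (hexp a)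
    rcases (hq.eq_one_or_self_of_dvd _ h1) with h | h
    · exact absurd (orderOf_eq_one_iff.mp h) ha
    · exact h
  set S : Finset (Subgroup A) := Finset.univ.filter (fun H => Nat.card H = q) with hS
  have hmemS : ∀ H : Subgroup A, H ∈ S ↔ Nat.card H = q := by intro H; simp [hS]
  have hzS : ∀ a : A, a ≠ 1 → zpowers a ∈ S := by
    intro a ha
    rw [hmemS, Nat.card_zpowers, hordq a ha]
  set T : Finset A := Finset.univ.erase 1 with hT
  have hTcard : T.card = q ^ 2 - 1 := by
    rw [hT, Finset.card_erase_of_mem (Finset.mem_univ 1), Finset.card_univ,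
      ← Nat.card_eq_fintype_card, hcard]
  have hfib : ∀ H ∈ S, (T.filter (fun a => zpowers a = H)).card = q - 1 := by
    intro H hH
    have he : T.filter (fun a => zpowers a = H) = (Finset.univ.filter (· ∈ H)).erase 1 := by
      ext a
      simp only [Finset.mem_filter, Finset.mem_erase, hT, Finset.mem_univ, true_and, and_true]
      constructor
      · rintro ⟨ha1, rfl⟩
        exact ⟨ha1, mem_zpowers a⟩
      · rintro ⟨ha1, haH⟩
        exact ⟨ha1, (eq_zpowers_of_mem hq ((hmemS H).mp hH) haH ha1).symm⟩
    rw [he, Finset.card_erase_of_mem (by simp [H.one_mem])]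
    have hcs : (Finset.univ.filter (· ∈ H)).card = Nat.card H := by
      rw [Nat.card_eq_fintype_card, Fintype.card_subtype]
    rw [hcs, (hmemS H).mp hH]
  have hcount : T.card = S.card * (q - 1) := by
    rw [Finset.card_eq_sum_card_fiberwise (f := fun a => zpowers a) (t := S)
      (fun a ha => hzS a (by simpa [hT] using ha))]
    rw [Finset.sum_congr rfl hfib, Finset.sum_const, smul_eq_mul]
  have hScard : S.card = q + 1 := by
    obtain ⟨r, rfl⟩ : ∃ r, q = r + 2 := ⟨q - 2, by have := hq.two_le; omega⟩
    rw [hTcard] at hcount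
    have h2 : (r + 2) ^ 2 - 1 = (r + 3) * (r + 1) := by ring_nf; omega
    rw [h2] at hcount
    have h1 : r + 2 - 1 = r + 1 := rfl
    rw [h1] at hcount
    have h3 : S.card * (r + 1) = (r + 3) * (r + 1) := by omega
    have h4 := Nat.eq_of_mul_eq_mul_right (by omega : 0 < r + 1) h3
    omega
  refine ⟨S.toList, S.nodup_toList, by rw [Finset.length_toList, hScard],
    fun H hH => (hmemS H).mp (Finset.mem_toList.mp hH),
    fun a ha => Finset.mem_toList.mpr (hzS a ha)⟩

theorem card_le_of_small_centralizers {p q m : ℕ} (hp : p.Prime) (hq : q.Prime)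
    (hpq : p ≠ q) (hm : 0 < m) {P A : Type*} [Group P] [Finite P] [CommGroup A] [Finite A]
    (hP : IsPGroup p P) (hcard : Nat.card A = q ^ 2) (hexp : ∀ a : A, a ^ q = 1)
    (φ : A →* MulAut P) (hfix : ∀ a : A, a ≠ 1 → Nat.card (fixedSub φ a) ≤ m) :
    Nat.card P ≤ m ^ (q + 1) := by
  classical
  obtain ⟨L, hnd, hlen, hLq, hcov⟩ := exists_L hq hcard hexp
  have hbound : ∀ H ∈ L, Nat.card (fixedOf φ H) ≤ m := by
    intro H hH
    obtain ⟨a, haH, ha1, _⟩ := exists_nontrivial_elt hq (hLq H hH)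
    exact le_trans (Subgroup.card_le_of_le (fixedOf_le_fixedSub φ haH)) (hfix a ha1)
  set F : (∀ i : Fin L.length, ↥(fixedOf φ L[i])) → P :=
    fun w => (List.ofFn (fun i => ((w i : ↥(fixedOf φ L[i])) : P))).prod with hF
  have hsurj : Function.Surjective F := by
    intro x
    obtain ⟨w, hw1, hw2⟩ := key_decomp hq hp hpq L hnd hlen hLq hcov
      (Nat.card P) P inferInstance inferInstance rfl hP φ x
    refine ⟨fun i => ⟨w L[i], hw1 L[i] (L.getElem_mem i.isLt)⟩, ?_⟩
    rw [hF]
    simp only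
    show (List.ofFn fun i : Fin L.length => w L[(i : ℕ)]).prod = x
    rw [List.ofFn_getElem_eq_map L w]
    exact hw2.symm
  have h1 : Nat.card P ≤ Nat.card (∀ i : Fin L.length, ↥(fixedOf φ L[i])) :=
    Nat.card_le_card_of_surjective F hsurj
  rw [Nat.card_pi] at h1
  calc Nat.card P ≤ ∏ i : Fin L.length, Nat.card ↥(fixedOf φ L[i]) := h1
    _ ≤ ∏ _i : Fin L.length, m :=
        Finset.prod_le_prod' (fun i _ => hbound L[i] (L.getElem_mem i.isLt))
    _ = m ^ L.length := by rw [Finset.prod_const, Finset.card_univ, Fintype.card_fin]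
    _ = m ^ (q + 1) := by rw [hlen]
end

section
/- Let m be a positive integer and q a prime with q > m!. Let A be an elementary abelian group of order q² acting by automorphisms on a finite group G with gcd(q,|G|) = 1, such that |C_G(a)| ≤ m for every nontrivial a ∈ A. Then |G| ≤ m. -/
section Aux

open Subgroup Pointwise

variable {A : Type*} [Group A] {G : Type*} [Group G]

lemma mem_fixedSub {φ : A →* MulAut G} {a : A} {g : G} :
    g ∈ fixedSub φ a ↔ φ a g = g := Iff.rfl

lemma aut_inv_apply (φ : A →* MulAut G) (a : A) (g : G) : φ a⁻¹ (φ a g) = g := by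
  rw [map_inv]
  exact (φ a).symm_apply_apply g

lemma aut_apply_inv (φ : A →* MulAut G) (a : A) (g : G) : φ a (φ a⁻¹ g) = g := by
  rw [map_inv]
  exact (φ a).apply_symm_apply g

/-- Restriction of an action by automorphisms to an invariant subgroup. -/
def restrictAut (φ : A →* MulAut G) (N : Subgroup G)
    (h : ∀ (a : A) (g : G), g ∈ N → φ a g ∈ N) : A →* MulAut ↥N where
  toFun a :=
    { toFun := fun x => ⟨φ a x, h a x x.2⟩
      invFun := fun x => ⟨φ a⁻¹ x, h a⁻¹ x x.2⟩
      left_inv := fun x => Subtype.ext (aut_inv_apply φ a x)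
      right_inv := fun x => Subtype.ext (aut_apply_inv φ a x)
      map_mul' := fun x y => Subtype.ext (map_mul (φ a) (x : G) (y : G)) }
  map_one' := by
    ext x
    simp
  map_mul' a b := by
    ext x
    simp [MulAut.mul_apply]

@[simp] lemma restrictAut_apply (φ : A →* MulAut G) (N : Subgroup G)
    (h : ∀ (a : A) (g : G), g ∈ N → φ a g ∈ N) (a : A) (x : ↥N) :
    ((restrictAut φ N h a x : ↥N) : G) = φ a x := rfl

/-- Induced action by automorphisms on the quotient by an invariant normal subgroup. -/
def quotAut (φ : A →* MulAut G) (N : Subgroup G) [N.Normal]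
    (h : ∀ (a : A) (g : G), g ∈ N → φ a g ∈ N) : A →* MulAut (G ⧸ N) where
  toFun a :=
    { toFun := QuotientGroup.map N N (φ a).toMonoidHom (fun g hg => h a g hg)
      invFun := QuotientGroup.map N N (φ a⁻¹).toMonoidHom (fun g hg => h a⁻¹ g hg)
      left_inv := fun x => by
        induction x using QuotientGroup.induction_on with
        | H g => simp [QuotientGroup.map_mk, aut_inv_apply]
      right_inv := fun x => by
        induction x using QuotientGroup.induction_on with
        | H g => simp [QuotientGroup.map_mk, aut_apply_inv]
      map_mul' := fun x y => map_mul _ x y }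
  map_one' := by
    ext x
    induction x using QuotientGroup.induction_on with
    | H g => simp [QuotientGroup.map_mk]
  map_mul' a b := by
    ext x
    induction x using QuotientGroup.induction_on with
    | H g => simp [QuotientGroup.map_mk, MulAut.mul_apply]

@[simp] lemma quotAut_mk (φ : A →* MulAut G) (N : Subgroup G) [N.Normal]
    (h : ∀ (a : A) (g : G), g ∈ N → φ a g ∈ N) (a : A) (g : G) :
    quotAut φ N h a (QuotientGroup.mk g : G ⧸ N) = (QuotientGroup.mk (φ a g) : G ⧸ N) :=
  QuotientGroup.map_mk N N (φ a).toMonoidHom (fun g hg => h a g hg) g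

lemma mulAut_zpow_fix {X : Type*} [Group X] (e : MulAut X) {x : X} (hx : e x = x) (k : ℤ) :
    (e ^ k) x = x := by
  have h1 : e ∈ MulAction.stabilizer (MulAut X) x := hx
  exact zpow_mem h1 k

end Aux

section Gen

open Subgroup Pointwise

variable {q : ℕ} {A : Type*} [CommGroup A] [Finite A]

/-- Coprime action of a `q`-element: fixed points in the quotient lift to fixed points. -/
lemma fixedSub_quot_le {G : Type*} [Group G] [Finite G] (hq : q.Prime)
    (hexp : ∀ a : A, a ^ q = 1)
    (φ : A →* MulAut G) (N : Subgroup G) [N.Normal]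
    (h : ∀ (a : A) (g : G), g ∈ N → φ a g ∈ N)
    (hcoN : ¬ q ∣ Nat.card N) (a : A) :
    fixedSub (quotAut φ N h) a ≤ (fixedSub φ a).map (QuotientGroup.mk' N) := by
  haveI : Fact q.Prime := ⟨hq⟩
  intro gb hgb
  rw [mem_fixedSub] at hgb
  obtain ⟨g₀, hg₀⟩ := QuotientGroup.mk_surjective gb
  set X := {x : G // (x : G ⧸ N) = gb} with hX
  have key : ∀ b : ↥(Subgroup.zpowers a), ∀ x : G, (x : G ⧸ N) = gb →
      ((φ (b : A) x : G) : G ⧸ N) = gb := by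
    rintro ⟨b, k, rfl⟩ x hx
    show ((φ (a ^ k) x : G) : G ⧸ N) = gb
    have h1 : ((φ (a ^ k) x : G) : G ⧸ N) = quotAut φ N h (a ^ k) (x : G ⧸ N) := by
      rw [quotAut_mk]
    rw [h1, hx, map_zpow]
    exact mulAut_zpow_fix _ hgb k
  letI smulInst : SMul ↥(Subgroup.zpowers a) X :=
    ⟨fun b x => ⟨φ (b : A) x.1, key b x.1 x.2⟩⟩
  have smul_def : ∀ (b : ↥(Subgroup.zpowers a)) (x : X), (b • x).1 = φ (b : A) x.1 :=
    fun b x => rfl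
  letI : MulAction ↥(Subgroup.zpowers a) X :=
    { one_smul := fun x => Subtype.ext (by rw [smul_def]; simp)
      mul_smul := fun b c x => Subtype.ext (by
        rw [smul_def, smul_def, smul_def]
        push_cast
        rw [map_mul, MulAut.mul_apply]) }
  have hB : IsPGroup q ↥(Subgroup.zpowers a) := by
    intro b
    refine ⟨1, Subtype.ext ?_⟩
    rw [pow_one]
    push_cast
    exact hexp (b : A)
  have hcardX : Nat.card X = Nat.card N := by
    refine Nat.card_congr ⟨fun x => ⟨g₀⁻¹ * x.1, ?_⟩, fun n => ⟨g₀ * n.1, ?_⟩, ?_, ?_⟩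
    · have : (g₀ : G ⧸ N) = ((x.1 : G) : G ⧸ N) := by rw [hg₀, x.2]
      exact QuotientGroup.eq.mp this
    · rw [← hg₀]
      symm
      exact QuotientGroup.eq.mpr (by simpa using n.2)
    · intro x
      exact Subtype.ext (by simp)
    · intro n
      exact Subtype.ext (by simp)
  have hcoX : ¬ q ∣ Nat.card X := by rwa [hcardX]
  obtain ⟨x, hx⟩ := hB.nonempty_fixed_point_of_prime_not_dvd_card X hcoX
  have hfix := (MulAction.mem_fixedPoints.mp hx) ⟨a, Subgroup.mem_zpowers a⟩
  have hfix' : φ a x.1 = x.1 := congrArg Subtype.val hfix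
  exact ⟨x.1, hfix', x.2⟩

/-- Generation for abelian groups: `V` is generated by the fixed subgroups. -/
lemma abelian_gen (hq : q.Prime) (hcardA : Nat.card A = q ^ 2) (hexp : ∀ a : A, a ^ q = 1)
    (V : Type*) [CommGroup V] [Finite V] (φ : A →* MulAut V) (hco : ¬ q ∣ Nat.card V) :
    (⨆ (a : A) (_ : a ≠ 1), fixedSub φ a) = ⊤ := by
  classical
  haveI : Fintype A := Fintype.ofFinite A
  haveI : Fintype (Subgroup A) := Fintype.ofFinite _
  set K := ⨆ (a : A) (_ : a ≠ 1), fixedSub φ a with hKdef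
  have hKle : ∀ a : A, a ≠ 1 → fixedSub φ a ≤ K := fun a ha =>
    le_iSup_of_le a (le_iSup_of_le ha le_rfl)
  have hA1 : Nontrivial A := by
    rw [← Finite.one_lt_card_iff_nontrivial, hcardA]
    exact Nat.one_lt_pow two_ne_zero hq.one_lt
  obtain ⟨b₀, hb₀⟩ := exists_ne (1 : A)
  have horder : ∀ a : A, a ≠ 1 → orderOf a = q := by
    intro a ha
    rcases hq.eq_one_or_self_of_dvd _ (orderOf_dvd_of_pow_eq_one (hexp a)) with h | h
    · exact absurd (orderOf_eq_one_iff.mp h) ha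
    · exact h
  set S : Finset (Subgroup A) := Finset.univ.filter (fun B => Nat.card ↥B = q) with hSdef
  have hzp : ∀ a : A, a ≠ 1 → Subgroup.zpowers a ∈ S := by
    intro a ha
    simp only [hSdef, Finset.mem_filter, Finset.mem_univ, true_and]
    rw [Nat.card_zpowers, horder a ha]
  have huniq : ∀ a : A, a ≠ 1 → ∀ B ∈ S, a ∈ B → B = Subgroup.zpowers a := by
    intro a ha B hB haB
    have hle : Subgroup.zpowers a ≤ B := Subgroup.zpowers_le.mpr haB
    have hcards : Nat.card ↥B ≤ Nat.card ↥(Subgroup.zpowers a) := by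
      simp only [hSdef, Finset.mem_filter, Finset.mem_univ, true_and] at hB
      rw [hB, Nat.card_zpowers, horder a ha]
    exact (Subgroup.eq_of_le_of_card_ge hle hcards).symm
  -- cardinality of S
  have hScard : S.card = q + 1 := by
    have hcount : (Finset.univ.erase (1 : A)).card =
        ∑ B ∈ S, ((Finset.univ.erase (1 : A)).filter (fun a => Subgroup.zpowers a = B)).card := by
      refine Finset.card_eq_sum_card_fiberwise ?_
      intro a ha
      exact hzp a (Finset.ne_of_mem_erase ha)
    have hfiber : ∀ B ∈ S,
        ((Finset.univ.erase (1 : A)).filter (fun a => Subgroup.zpowers a = B)).card = q - 1 := by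
      intro B hB
      have hBcard : Nat.card ↥B = q := by
        simpa only [hSdef, Finset.mem_filter, Finset.mem_univ, true_and] using hB
      have heq : (Finset.univ.erase (1 : A)).filter (fun a => Subgroup.zpowers a = B) =
          (Finset.univ.filter (fun a => a ∈ B)).erase 1 := by
        ext a
        constructor
        · intro ha
          rw [Finset.mem_filter, Finset.mem_erase] at ha
          rw [Finset.mem_erase, Finset.mem_filter]
          exact ⟨ha.1.1, Finset.mem_univ a, ha.2 ▸ Subgroup.mem_zpowers a⟩
        · intro ha
          rw [Finset.mem_erase, Finset.mem_filter] at ha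
          rw [Finset.mem_filter, Finset.mem_erase]
          exact ⟨⟨ha.1, Finset.mem_univ a⟩, (huniq a ha.1 B hB ha.2.2).symm⟩
      rw [heq, Finset.card_erase_of_mem (by simp [Subgroup.one_mem])]
      congr 1
      rw [← hBcard, Nat.card_eq_fintype_card, Fintype.card_subtype]
    have hAcard : (Finset.univ.erase (1 : A)).card = q ^ 2 - 1 := by
      rw [Finset.card_erase_of_mem (Finset.mem_univ 1), Finset.card_univ,
        ← Nat.card_eq_fintype_card, hcardA]
    rw [hAcard, Finset.sum_congr rfl hfiber, Finset.sum_const, smul_eq_mul] at hcount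
    have hq1 : 0 < q - 1 := by have := hq.two_le; omega
    have hsq : q ^ 2 - 1 = (q + 1) * (q - 1) := by
      have := Nat.sq_sub_sq q 1
      simpa using this
    rw [hsq] at hcount
    exact Nat.eq_of_mul_eq_mul_right hq1 hcount.symm
  -- now the norm computation
  rw [eq_top_iff']
  intro v
  have hT : ∀ b : A, φ b (∏ c : A, φ c v) = ∏ c : A, φ c v := by
    intro b
    calc φ b (∏ c : A, φ c v) = ∏ c : A, φ (b * c) v := by
          rw [map_prod]
          exact Finset.prod_congr rfl fun c _ => by rw [map_mul, MulAut.mul_apply]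
      _ = ∏ c : A, φ c v := Fintype.prod_equiv (Equiv.mulLeft b) _ _ fun c => rfl
  have hTK : (∏ c : A, φ c v) ∈ K := hKle b₀ hb₀ (mem_fixedSub.mpr (hT b₀))
  have hNB : ∀ B : Subgroup A, ∀ b₁ ∈ B,
      φ b₁ (∏ b : ↥B, φ (b : A) v) = ∏ b : ↥B, φ (b : A) v := by
    intro B b₁ hb₁
    calc φ b₁ (∏ b : ↥B, φ (b : A) v) = ∏ b : ↥B, φ ((b₁ * b : A)) v := by
          rw [map_prod]
          exact Finset.prod_congr rfl fun b _ => by rw [map_mul, MulAut.mul_apply]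
      _ = ∏ b : ↥B, φ (b : A) v :=
          Fintype.prod_equiv (Equiv.mulLeft (⟨b₁, hb₁⟩ : ↥B)) _ _ fun b => rfl
  have hNBK : ∀ B ∈ S, (∏ b : ↥B, φ (b : A) v) ∈ K := by
    intro B hB
    have hBcard : Nat.card ↥B = q := by
      simpa only [hSdef, Finset.mem_filter, Finset.mem_univ, true_and] using hB
    have : Nontrivial ↥B := by
      rw [← Finite.one_lt_card_iff_nontrivial, hBcard]
      exact hq.one_lt
    obtain ⟨b₁, hb₁⟩ := exists_ne (1 : ↥B)
    have hb₁' : (b₁ : A) ≠ 1 := fun h =>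
      hb₁ (Subtype.ext (by rw [h]; exact (OneMemClass.coe_one _).symm))
    exact hKle _ hb₁' (mem_fixedSub.mpr (hNB B b₁ b₁.2))
  -- the double product identity
  have hTR : (∏ c : A, φ c v) = v * ∏ b ∈ Finset.univ.erase (1 : A), φ b v := by
    rw [← Finset.mul_prod_erase Finset.univ (fun b => φ b v) (Finset.mem_univ (1 : A)),
      map_one, MulAut.one_apply]
  have hprod : (∏ B ∈ S, (∏ b : ↥B, φ (b : A) v)) =
      v ^ S.card * ∏ b ∈ Finset.univ.erase (1 : A), φ b v := by
    have step1 : ∀ B ∈ S, (∏ b : ↥B, φ (b : A) v) =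
        ∏ b ∈ Finset.univ.filter (fun x => x ∈ B), φ b v := fun B _ =>
      (Finset.prod_subtype (Finset.univ.filter fun x => x ∈ B) (fun x => by simp)
        fun b => φ b v).symm
    rw [Finset.prod_congr rfl step1]
    rw [Finset.prod_comm' (s' := fun b => S.filter (fun B => b ∈ B)) (t' := Finset.univ)
      (by intro B b; simp [and_comm])]
    have hmult : ∀ b : A, (∏ _B ∈ S.filter (fun B => b ∈ B), φ b v) =
        (φ b v) ^ (S.filter (fun B => b ∈ B)).card := fun b => Finset.prod_const _
    rw [Finset.prod_congr rfl (fun b _ => hmult b)]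
    rw [← Finset.mul_prod_erase Finset.univ
      (fun b => (φ b v) ^ (S.filter (fun B => b ∈ B)).card) (Finset.mem_univ (1 : A))]
    have h1 : S.filter (fun B => (1 : A) ∈ B) = S :=
      Finset.filter_true_of_mem fun B _ => Subgroup.one_mem B
    have h2 : ∀ b ∈ Finset.univ.erase (1 : A),
        (φ b v) ^ (S.filter (fun B => b ∈ B)).card = φ b v := by
      intro b hb
      have hbne : b ≠ 1 := Finset.ne_of_mem_erase hb
      have : S.filter (fun B => b ∈ B) = {Subgroup.zpowers b} := by
        ext B
        simp only [Finset.mem_filter, Finset.mem_singleton]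
        constructor
        · rintro ⟨hBS, hbB⟩
          exact huniq b hbne B hBS hbB
        · rintro rfl
          exact ⟨hzp b hbne, Subgroup.mem_zpowers b⟩
      rw [this, Finset.card_singleton, pow_one]
    rw [Finset.prod_congr rfl h2, h1, map_one, MulAut.one_apply]
  -- conclude v ^ q ∈ K
  have hvq : v ^ q ∈ K := by
    have hPK : (∏ B ∈ S, (∏ b : ↥B, φ (b : A) v)) ∈ K := Subgroup.prod_mem K hNBK
    have hv : v ^ q = (∏ B ∈ S, (∏ b : ↥B, φ (b : A) v)) * (∏ c : A, φ c v)⁻¹ := by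
      rw [hprod, hScard, hTR, pow_succ]
      group
    rw [hv]
    exact mul_mem hPK (inv_mem hTK)
  -- coprimality: v ∈ K
  by_cases hv1 : v = 1
  · rw [hv1]; exact one_mem K
  have hord : 1 < orderOf v := by
    have h0 : orderOf v ≠ 0 := (isOfFinOrder_of_finite v).orderOf_pos.ne'
    have h1 : orderOf v ≠ 1 := fun h => hv1 (orderOf_eq_one_iff.mp h)
    omega
  have hcop : Nat.Coprime q (orderOf v) :=
    hq.coprime_iff_not_dvd.mpr fun hdvd => hco (hdvd.trans (orderOf_dvd_natCard v))
  obtain ⟨x, -, hx⟩ := Nat.exists_mul_mod_eq_one_of_coprime hcop hord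
  have hvx : v = (v ^ q) ^ x := by
    rw [← pow_mul, ← pow_mod_orderOf, hx, pow_one]
  rw [hvx]
  exact pow_mem hvq x

/-- A subgroup whose restricted action is generated by fixed points lies below the
fixed-point supremum. -/
lemma le_iSup_fixed_of_restrict {G : Type*} [Group G] (φ : A →* MulAut G) (N : Subgroup G)
    (h : ∀ (a : A) (g : G), g ∈ N → φ a g ∈ N)
    (hgen : (⨆ (a : A) (_ : a ≠ 1), fixedSub (restrictAut φ N h) a) = ⊤) :
    N ≤ ⨆ (a : A) (_ : a ≠ 1), fixedSub φ a := by
  intro g hg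
  have hle : (⨆ (a : A) (_ : a ≠ 1), fixedSub (restrictAut φ N h) a) ≤
      Subgroup.comap N.subtype (⨆ (a : A) (_ : a ≠ 1), fixedSub φ a) := by
    refine iSup_le fun a => iSup_le fun ha => ?_
    intro x hx
    rw [Subgroup.mem_comap]
    have hmem : (x : G) ∈ fixedSub φ a :=
      mem_fixedSub.mpr (congrArg Subtype.val (mem_fixedSub.mp hx))
    have hsub : fixedSub φ a ≤ ⨆ (a : A) (_ : a ≠ 1), fixedSub φ a :=
      le_iSup_of_le a (le_iSup_of_le ha le_rfl)
    exact hsub hmem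
  have : (⟨g, hg⟩ : ↥N) ∈ Subgroup.comap N.subtype (⨆ (a : A) (_ : a ≠ 1), fixedSub φ a) :=
    hle (by rw [hgen]; trivial)
  exact this

/-- The generation theorem: a group with a coprime action of an elementary abelian group of
order `q ^ 2` is generated by the fixed-point subgroups of the nontrivial elements. -/
lemma gen_top (hq : q.Prime) (hcardA : Nat.card A = q ^ 2) (hexp : ∀ a : A, a ^ q = 1) :
    ∀ (n : ℕ) (G : Type*) [Group G] [Finite G] (φ : A →* MulAut G),
      Nat.card G ≤ n → ¬ q ∣ Nat.card G →
      (⨆ (a : A) (_ : a ≠ 1), fixedSub φ a) = ⊤ := by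
  intro n
  induction n with
  | zero =>
    intro G _ _ φ hn _
    exact absurd (Nat.card_pos (α := G)) (by omega)
  | succ n ih =>
    intro G _ _ φ hn hco
    classical
    by_cases hG : Subsingleton G
    · rw [eq_top_iff']
      intro g
      rw [Subsingleton.elim g 1]
      exact one_mem _
    have hGnt : Nontrivial G := not_subsingleton_iff_nontrivial.mp hG
    have hcardpos : 0 < Nat.card G := Nat.card_pos
    have hKle : ∀ a : A, a ≠ 1 → fixedSub φ a ≤ ⨆ (a : A) (_ : a ≠ 1), fixedSub φ a :=
      fun a ha => le_iSup_of_le a (le_iSup_of_le ha le_rfl)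
    -- general recursion principle for an invariant normal subgroup
    have hstep : ∀ N : Subgroup G, N.Normal → Nontrivial ↥N → N ≠ ⊤ →
        (∀ (a : A) (g : G), g ∈ N → φ a g ∈ N) →
        (⨆ (a : A) (_ : a ≠ 1), fixedSub φ a) = ⊤ := by
      intro N hNn hNnt hNtop hNinv
      haveI := hNn
      have hNdvd : Nat.card ↥N ∣ Nat.card G := Subgroup.card_subgroup_dvd_card N
      have hqN : ¬ q ∣ Nat.card ↥N := fun hd => hco (hd.trans hNdvd)
      have hNlt : Nat.card ↥N < Nat.card G :=
        lt_of_le_of_ne (Nat.le_of_dvd hcardpos hNdvd)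
          (fun h => hNtop (Subgroup.eq_top_of_card_eq N h))
      have hrecN := ih ↥N (restrictAut φ N hNinv) (by omega) hqN
      have hNK := le_iSup_fixed_of_restrict φ N hNinv hrecN
      -- quotient
      have hcardeq := Subgroup.card_eq_card_quotient_mul_card_subgroup N
      have hN2 : 2 ≤ Nat.card ↥N := Finite.one_lt_card_iff_nontrivial.mpr hNnt
      have hQpos : 0 < Nat.card (G ⧸ N) := Nat.card_pos
      have hQlt : Nat.card (G ⧸ N) < Nat.card G := by nlinarith
      have hqQ : ¬ q ∣ Nat.card (G ⧸ N) := fun hd => hco (by rw [hcardeq]; exact hd.mul_right _)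
      have hrecQ := ih (G ⧸ N) (quotAut φ N hNinv) (by omega) hqQ
      have hlift : (⊤ : Subgroup (G ⧸ N)) ≤
          Subgroup.map (QuotientGroup.mk' N) (⨆ (a : A) (_ : a ≠ 1), fixedSub φ a) := by
        rw [← hrecQ]
        refine iSup_le fun a => iSup_le fun ha => ?_
        exact (fixedSub_quot_le hq hexp φ N hNinv hqN a).trans
          (Subgroup.map_mono (hKle a ha))
      have hcomap := Subgroup.comap_mono (f := QuotientGroup.mk' N) hlift
      rw [Subgroup.comap_top, Subgroup.comap_map_eq, QuotientGroup.ker_mk'] at hcomap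
      rw [eq_top_iff]
      exact hcomap.trans (sup_le le_rfl hNK)
    by_cases hpg : ∃ p : ℕ, p.Prime ∧ IsPGroup p G
    · obtain ⟨p, hp, hpG⟩ := hpg
      haveI : Fact p.Prime := ⟨hp⟩
      by_cases hZ : Subgroup.center G = ⊤
      · -- abelian case
        letI cg : CommGroup G :=
          { (inferInstance : Group G) with
            mul_comm := fun x y => by
              have hx : x ∈ Subgroup.center G := hZ ▸ Subgroup.mem_top x
              exact (Subgroup.mem_center_iff.mp hx y).symm }
        exact abelian_gen hq hcardA hexp G φ hco
      · -- center is a proper nontrivial invariant normal subgroup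
        have hZnt : Nontrivial ↥(Subgroup.center G) := hpG.center_nontrivial
        have hZinv : ∀ (a : A) (g : G), g ∈ Subgroup.center G → φ a g ∈ Subgroup.center G := by
          intro a g hg
          rw [Subgroup.mem_center_iff] at hg ⊢
          intro h
          calc h * φ a g = φ a (φ a⁻¹ h) * φ a g := by rw [aut_apply_inv]
            _ = φ a (φ a⁻¹ h * g) := by rw [map_mul]
            _ = φ a (g * φ a⁻¹ h) := by rw [hg (φ a⁻¹ h)]
            _ = φ a g * h := by rw [map_mul, aut_apply_inv]
        exact hstep (Subgroup.center G) inferInstance hZnt hZ hZinv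
    · -- not a p-group: use invariant Sylow subgroups
      push_neg at hpg
      have hqA : IsPGroup q A := fun a => ⟨1, by rw [pow_one]; exact hexp a⟩
      haveI : Fact q.Prime := ⟨hq⟩
      letI : MulDistribMulAction A G := MulDistribMulAction.compHom G φ
      have main : ∀ p ∈ (Nat.card G).primeFactors,
          p ^ (Nat.card G).factorization p ∣
            Nat.card ↥(⨆ (a : A) (_ : a ≠ 1), fixedSub φ a) := by
        intro p hp'
        have hp : p.Prime := Nat.prime_of_mem_primeFactors hp'
        haveI : Fact p.Prime := ⟨hp⟩
        have hsylcard : Nat.card (Sylow p G) ∣ Nat.card G := by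
          rw [Sylow.card_eq_card_quotient_normalizer (Classical.arbitrary (Sylow p G))]
          rw [Subgroup.card_eq_card_quotient_mul_card_subgroup
            (Subgroup.normalizer ((Classical.arbitrary (Sylow p G) : Subgroup G) : Set G))]
          exact Dvd.intro _ rfl
        have hsyl : ¬ q ∣ Nat.card (Sylow p G) := fun hd => hco (hd.trans hsylcard)
        obtain ⟨P, hP⟩ := hqA.nonempty_fixed_point_of_prime_not_dvd_card (Sylow p G) hsyl
        have hPfix : ∀ a : A, a • P = P := MulAction.mem_fixedPoints.mp hP
        have hPinv : ∀ (a : A) (g : G), g ∈ (P : Subgroup G) → φ a g ∈ (P : Subgroup G) := by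
          intro a g hg
          have h1 : ((a • P : Sylow p G) : Subgroup G) = (P : Subgroup G) := by rw [hPfix a]
          rw [← h1]
          exact Subgroup.smul_mem_pointwise_smul g a (P : Subgroup G) hg
        have hPdvd : Nat.card ↥(P : Subgroup G) ∣ Nat.card G :=
          Subgroup.card_subgroup_dvd_card _
        have hPlt : Nat.card ↥(P : Subgroup G) < Nat.card G := by
          refine lt_of_le_of_ne (Nat.le_of_dvd hcardpos hPdvd) fun heq => ?_
          have hPtop : (P : Subgroup G) = ⊤ := Subgroup.eq_top_of_card_eq _ heq
          have hsurj : Function.Surjective (P : Subgroup G).subtype := fun g =>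
            ⟨⟨g, by rw [hPtop]; trivial⟩, rfl⟩
          exact hpg p hp (P.isPGroup'.of_surjective (P : Subgroup G).subtype hsurj)
        have hqP : ¬ q ∣ Nat.card ↥(P : Subgroup G) := fun hd => hco (hd.trans hPdvd)
        have hrecP := ih ↥(P : Subgroup G) (restrictAut φ (P : Subgroup G) hPinv)
          (by omega) hqP
        have hPK := le_iSup_fixed_of_restrict φ (P : Subgroup G) hPinv hrecP
        have hPcard : Nat.card ↥(P : Subgroup G) = p ^ (Nat.card G).factorization p :=
          P.card_eq_multiplicity
        rw [← hPcard]
        exact Subgroup.card_dvd_of_le hPK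
      have hdvd1 : Nat.card ↥(⨆ (a : A) (_ : a ≠ 1), fixedSub φ a) ∣ Nat.card G :=
        Subgroup.card_subgroup_dvd_card _
      have hKpos : 0 < Nat.card ↥(⨆ (a : A) (_ : a ≠ 1), fixedSub φ a) := Nat.card_pos
      have hdvd2 : Nat.card G ∣ Nat.card ↥(⨆ (a : A) (_ : a ≠ 1), fixedSub φ a) := by
        rw [← Nat.factorization_le_iff_dvd hcardpos.ne' hKpos.ne']
        rw [Finsupp.le_def]
        intro p
        by_cases hp' : p ∈ (Nat.card G).primeFactors
        · have hp : p.Prime := Nat.prime_of_mem_primeFactors hp'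
          exact (hp.pow_dvd_iff_le_factorization hKpos.ne').mp (main p hp')
        · have : (Nat.card G).factorization p = 0 := by
            rw [← Finsupp.notMem_support_iff, Nat.support_factorization]
            exact hp'
          omega
      exact Subgroup.eq_top_of_card_eq _ (Nat.dvd_antisymm hdvd1 hdvd2)

end Gen

theorem card_le_of_large_prime {m q : ℕ} (hm : 0 < m) (hq : q.Prime)
    (hqm : Nat.factorial m < q) {A G : Type*} [CommGroup A] [Finite A] [Group G] [Finite G]
    (hcard : Nat.card A = q ^ 2) (hexp : ∀ a : A, a ^ q = 1)
    (φ : A →* MulAut G) (hco : ¬ q ∣ Nat.card G)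
    (hfix : ∀ a : A, a ≠ 1 → Nat.card (fixedSub φ a) ≤ m) :
    Nat.card G ≤ m := by
  classical
  have hA1 : Nontrivial A := by
    rw [← Finite.one_lt_card_iff_nontrivial, hcard]
    exact Nat.one_lt_pow two_ne_zero hq.one_lt
  obtain ⟨b₀, hb₀⟩ := exists_ne (1 : A)
  -- all fixed subgroups of nontrivial elements coincide
  have hCle : ∀ a : A, a ≠ 1 → fixedSub φ a ≤ fixedSub φ b₀ := by
    intro a ha g hg
    set H := fixedSub φ a with hH
    have hinv : ∀ (b : A) (g : G), g ∈ H → φ b g ∈ H := by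
      intro b g hg
      rw [hH, mem_fixedSub] at hg ⊢
      rw [← MulAut.mul_apply, ← map_mul, mul_comm, map_mul, MulAut.mul_apply, hg]
    set Φ := restrictAut φ H hinv with hΦ
    have htriv : ∀ b : A, Φ b = 1 := by
      intro b
      by_contra hne
      have h1 : orderOf (Φ b) ∣ q :=
        orderOf_dvd_of_pow_eq_one (by rw [← map_pow, hexp, map_one])
      have h2 : orderOf (Φ b) = q :=
        (hq.eq_one_or_self_of_dvd _ h1).resolve_left
          (fun h => hne (orderOf_eq_one_iff.mp h))
      haveI : Finite (MulAut ↥H) :=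
        Finite.of_injective (fun e => (e : ↥H → ↥H)) DFunLike.coe_injective
      have h3 : orderOf (Φ b) ∣ Nat.card (MulAut ↥H) := orderOf_dvd_natCard _
      have h4 : Nat.card (MulAut ↥H) ≤ Nat.card (Equiv.Perm ↥H) :=
        Nat.card_le_card_of_injective (fun e => e.toEquiv)
          (fun e₁ e₂ h => MulEquiv.ext fun x => congrArg (fun t : Equiv.Perm ↥H => t x) h)
      have h5 : Nat.card (Equiv.Perm ↥H) = (Nat.card ↥H).factorial := by
        haveI : Fintype ↥H := Fintype.ofFinite _
        haveI : DecidableEq ↥H := Classical.decEq _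
        rw [Nat.card_eq_fintype_card, Nat.card_eq_fintype_card, Fintype.card_perm]
      have h6 : (Nat.card ↥H).factorial ≤ Nat.factorial m :=
        Nat.factorial_le (hfix a ha)
      have h7 : q ≤ Nat.card (MulAut ↥H) := by
        rw [← h2]
        exact Nat.le_of_dvd Nat.card_pos h3
      omega
    have := congrArg (fun e : MulAut ↥H => ((e ⟨g, hg⟩ : ↥H) : G)) (htriv b₀)
    exact mem_fixedSub.mpr this
  have hgen := gen_top hq hcard hexp (Nat.card G) G φ le_rfl hco
  have htop : fixedSub φ b₀ = ⊤ := by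
    rw [eq_top_iff, ← hgen]
    exact iSup_le fun a => iSup_le fun ha => hCle a ha
  calc Nat.card G = Nat.card ↥(fixedSub φ b₀) := by rw [htop, Subgroup.card_top]
    _ ≤ m := hfix b₀ hb₀
end

section
/- Let p be a prime, P a finite p-group, and A a finite p'-group of automorphisms of P. If |[P,a]| ≤ m for every a ∈ A, then |A| is bounded by a function of m only. -/
/-- The subgroup `[P, a]` generated by `x⁻¹ * a x` for an automorphism `a` of `P`. -/
def commOfAut {P : Type*} [Group P] (a : MulAut P) : Subgroup P :=
  Subgroup.closure {x : P | ∃ g : P, x = g⁻¹ * a g}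

namespace CAB

open Subgroup MulAction Pointwise

theorem self_mem_commOfAut {P : Type*} [Group P] (a : MulAut P) (g : P) :
    g⁻¹ * a g ∈ commOfAut a :=
  Subgroup.subset_closure ⟨g, rfl⟩

/-- The δ-stability lemma: a coprime automorphism acting trivially on a subgroup `N` and
trivially on `M` "mod `N`" acts trivially on `M`. -/
theorem fix_of_fix_step {P : Type*} [Group P] {p : ℕ} (hp : p.Prime) (hP : IsPGroup p P)
    (a : MulAut P) {n : ℕ} (han : a ^ n = 1) (hpn : ¬ p ∣ n)
    {N M : Subgroup P} (hfix : ∀ x ∈ N, a x = x) (hstep : ∀ x ∈ M, x⁻¹ * a x ∈ N) :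
    ∀ x ∈ M, a x = x := by
  intro x hx
  set δ := x⁻¹ * a x with hδ
  have hδN : δ ∈ N := hstep x hx
  have hax : a x = x * δ := by rw [hδ]; group
  have hfixδ : a δ = δ := hfix δ hδN
  have key : ∀ k : ℕ, (a ^ k) x = x * δ ^ k := by
    intro k
    induction k with
    | zero => simp
    | succ k ih =>
      rw [pow_succ' a k]
      show a ((a ^ k) x) = x * δ ^ (k + 1)
      rw [ih, map_mul, map_pow, hfixδ, hax, pow_succ' δ k, mul_assoc]
  have h1 : x * δ ^ n = x := by rw [← key n, han]; simp
  have hδn : δ ^ n = 1 := by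
    have h2 : x * δ ^ n = x * 1 := by rw [h1, mul_one]
    exact mul_left_cancel h2
  obtain ⟨j, hj⟩ := hP δ
  have hd1 : orderOf δ ∣ n := orderOf_dvd_of_pow_eq_one hδn
  have hd2 : orderOf δ ∣ p ^ j := orderOf_dvd_of_pow_eq_one hj
  have hcop : Nat.Coprime (p ^ j) n := ((Nat.Prime.coprime_iff_not_dvd hp).mpr hpn).pow_left j
  have hone : orderOf δ = 1 := Nat.eq_one_of_dvd_coprimes hcop hd2 hd1
  have : δ = 1 := orderOf_eq_one_iff.mp hone
  rw [hax, this, mul_one]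

/-- card of sup of subgroups in a "commutative" group is at most the product. -/
theorem card_sup_le_of_comm {W : Type*} [Group W] [Finite W]
    (hcomm : ∀ x y : W, x * y = y * x) (H K : Subgroup W) :
    Nat.card ↥(H ⊔ K) ≤ Nat.card H * Nat.card K := by
  haveI : K.Normal := ⟨fun n hn g => by rw [hcomm g n, mul_assoc, mul_inv_cancel, mul_one]; exact hn⟩
  have hset : (↑(H ⊔ K) : Set W) = (↑H : Set W) * (↑K : Set W) := Subgroup.mul_normal H K
  have hsur : Function.Surjective (fun hk : ↥H × ↥K => (⟨hk.1.1 * hk.2.1,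
      mul_mem ((le_sup_left : H ≤ H ⊔ K) hk.1.2) ((le_sup_right : K ≤ H ⊔ K) hk.2.2)⟩ :
        ↥(H ⊔ K))) := by
    rintro ⟨y, hy⟩
    have hy' : y ∈ (↑H * ↑K : Set W) := hset ▸ hy
    obtain ⟨h, hh, k, hk, rfl⟩ := hy'
    exact ⟨(⟨h, hh⟩, ⟨k, hk⟩), rfl⟩
  calc Nat.card ↥(H ⊔ K) ≤ Nat.card (↥H × ↥K) := Nat.card_le_card_of_surjective _ hsur
    _ = Nat.card H * Nat.card K := Nat.card_prod _ _

theorem card_closure_le_pow {W : Type*} [Group W] [Finite W] {p : ℕ} (hp : 0 < p)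
    (hcomm : ∀ x y : W, x * y = y * x) (hexp : ∀ x : W, x ^ p = 1) (S : Finset W) :
    Nat.card ↥(Subgroup.closure (S : Set W)) ≤ p ^ S.card := by
  classical
  induction S using Finset.induction with
  | empty => simp [Subgroup.card_bot]
  | @insert a S ha ih =>
    rw [Finset.coe_insert, Set.insert_eq, Subgroup.closure_union,
      Finset.card_insert_of_notMem ha]
    have h1 : Nat.card ↥(Subgroup.closure ({a} : Set W)) ≤ p := by
      rw [← Subgroup.zpowers_eq_closure, Nat.card_zpowers]
      exact Nat.le_of_dvd hp (orderOf_dvd_of_pow_eq_one (hexp a))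
    calc Nat.card ↥(Subgroup.closure ({a} : Set W) ⊔ Subgroup.closure (S : Set W))
        ≤ Nat.card ↥(Subgroup.closure ({a} : Set W)) *
          Nat.card ↥(Subgroup.closure (S : Set W)) := card_sup_le_of_comm hcomm _ _
      _ ≤ p * p ^ S.card := Nat.mul_le_mul h1 ih
      _ = p ^ (S.card + 1) := by rw [pow_succ, mul_comm]

theorem card_map_le {G H : Type*} [Group G] [Group H] (f : G →* H) (K : Subgroup G)
    [Finite ↥K] : Nat.card ↥(K.map f) ≤ Nat.card K :=
  Nat.card_le_card_of_surjective
    (fun k : ↥K => (⟨f k, Subgroup.mem_map_of_mem f k.2⟩ : ↥(K.map f)))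
    (by rintro ⟨y, x, hx, rfl⟩; exact ⟨⟨x, hx⟩, rfl⟩)

theorem card_subgroupOf_le {G : Type*} [Group G] (K M : Subgroup G) [Finite ↥K] :
    Nat.card ↥(K.subgroupOf M) ≤ Nat.card K := by
  apply Nat.card_le_card_of_injective
    (fun x : ↥(K.subgroupOf M) => (⟨x.1.1, x.2⟩ : ↥K))
  intro x y hxy
  have h : (x.1.1 : G) = y.1.1 := congrArg (fun z : ↥K => (z : G)) hxy
  exact Subtype.ext (Subtype.ext h)


/-- The key bound for a minimal invariant level. -/
theorem key_level_bound {p m : ℕ} (hp : p.Prime) (hm : 0 < m)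
    {W : Type*} [Group W] [Finite W] (hW : IsPGroup p W) [Nontrivial W]
    {Γ : Type*} [Group Γ] [Finite Γ] (φ : Γ →* MulAut W)
    (hirr : ∀ V : Subgroup W, V ≠ ⊥ → (∀ (γ : Γ), ∀ w ∈ V, φ γ w ∈ V) → V = ⊤)
    (hcm : ∀ γ : Γ, Nat.card ↥(commOfAut (φ γ)) ≤ m)
    (hess : ∃ γ : Γ, φ γ ≠ 1) :
    Nat.card W ≤ m ^ (2 * m) := by
  classical
  haveI : Fact p.Prime := ⟨hp⟩
  letI := Fintype.ofFinite W
  letI := Fintype.ofFinite Γ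
  -- applying an automorphism commutes with `(φ γ)⁻¹`
  have hinvap : ∀ (γ : Γ) (g : W), φ γ ((φ γ)⁻¹ g) = g := by
    intro γ g
    have : (φ γ) * (φ γ)⁻¹ = 1 := mul_inv_cancel _
    calc φ γ ((φ γ)⁻¹ g) = ((φ γ) * (φ γ)⁻¹) g := rfl
      _ = g := by rw [this]; rfl
  -- W is commutative
  have hcomm : ∀ x y : W, x * y = y * x := by
    have hZinv : ∀ (γ : Γ), ∀ w ∈ Subgroup.center W, φ γ w ∈ Subgroup.center W := by
      intro γ w hw
      rw [Subgroup.mem_center_iff] at hw ⊢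
      intro g
      calc g * φ γ w = φ γ ((φ γ)⁻¹ g) * φ γ w := by rw [hinvap]
        _ = φ γ ((φ γ)⁻¹ g * w) := by rw [map_mul]
        _ = φ γ (w * (φ γ)⁻¹ g) := by rw [hw]
        _ = φ γ w * g := by rw [map_mul, hinvap]
    have hne : Subgroup.center W ≠ ⊥ := by
      haveI := hW.center_nontrivial
      exact (Subgroup.one_lt_card_iff_ne_bot _).mp Finite.one_lt_card
    have hZ : Subgroup.center W = ⊤ := hirr _ hne hZinv
    intro x y
    exact (Subgroup.mem_center_iff.mp (hZ ▸ Subgroup.mem_top y)) x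
  letI : CommGroup W := { (inferInstance : Group W) with mul_comm := hcomm }
  -- W has exponent p
  have hexp : ∀ x : W, x ^ p = 1 := by
    by_cases hR : (powMonoidHom p : W →* W).range = ⊥
    · intro x
      have hx : x ^ p ∈ ((powMonoidHom p : W →* W).range : Subgroup W) := ⟨x, rfl⟩
      rw [hR] at hx
      simpa using hx
    · exfalso
      have hRtop : (powMonoidHom p : W →* W).range = ⊤ := by
        apply hirr _ hR
        rintro γ w ⟨y, rfl⟩
        exact ⟨φ γ y, by simp [powMonoidHom_apply, map_pow]⟩
      have hsurj : Function.Surjective (fun x : W => x ^ p) := by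
        intro y
        have : y ∈ ((powMonoidHom p : W →* W).range : Subgroup W) := hRtop ▸ Subgroup.mem_top y
        obtain ⟨x, hx⟩ := this
        exact ⟨x, hx⟩
      have hinj : Function.Injective (fun x : W => x ^ p) :=
        Finite.injective_iff_surjective.mpr hsurj
      -- find an element of order exactly p
      obtain ⟨x, hx1⟩ := exists_ne (1 : W)
      have hS : ∃ j : ℕ, x ^ p ^ j = 1 := hW x
      set j₀ := Nat.find hS with hj₀
      have hj₀spec : x ^ p ^ j₀ = 1 := Nat.find_spec hS
      have hj₀pos : 0 < j₀ := by
        rcases Nat.eq_zero_or_pos j₀ with h | h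
        · exfalso; apply hx1; simpa [h] using hj₀spec
        · exact h
      set y := x ^ p ^ (j₀ - 1) with hy
      have hyp : y ^ p = 1 := by
        rw [hy, ← pow_mul, ← pow_succ, Nat.sub_add_cancel hj₀pos]
        exact hj₀spec
      have hy1 : y ≠ 1 := Nat.find_min hS (by omega)
      exact hy1 (hinj (by simpa using hyp))
  -- the action of Γ on W
  letI : MulAction Γ W := MulAction.compHom W φ
  have hsmul : ∀ (γ : Γ) (x : W), γ • x = φ γ x := fun _ _ => rfl
  -- orbits of nontrivial elements generate W
  have horb : ∀ x : W, x ≠ 1 → Nat.card W ≤ p ^ (Nat.card (MulAction.orbit Γ x)) := by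
    intro x hx
    have hSinv : ∀ (γ : Γ), ∀ w ∈ Subgroup.closure (MulAction.orbit Γ x),
        φ γ w ∈ Subgroup.closure (MulAction.orbit Γ x) := by
      intro γ w hw
      induction hw using Subgroup.closure_induction with
      | mem w hw =>
        obtain ⟨c, rfl⟩ := MulAction.mem_orbit_iff.mp hw
        apply Subgroup.subset_closure
        rw [← hsmul, ← mul_smul]
        exact MulAction.mem_orbit x (γ * c)
      | one => simpa using Subgroup.one_mem _
      | mul u v _ _ hu hv => rw [map_mul]; exact Subgroup.mul_mem _ hu hv
      | inv u _ hu => rw [map_inv]; exact Subgroup.inv_mem _ hu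
    have hne : Subgroup.closure (MulAction.orbit Γ x) ≠ ⊥ := by
      intro h
      apply hx
      have h2 := Subgroup.subset_closure
        ((MulAction.mem_orbit_self x : x ∈ MulAction.orbit Γ x))
      rw [h] at h2
      simpa using h2
    have htop : Subgroup.closure (MulAction.orbit Γ x) = ⊤ := hirr _ hne hSinv
    haveI hfing : Fintype ↥(MulAction.orbit Γ x) := Fintype.ofFinite _
    set S : Finset W := Set.toFinset (MulAction.orbit Γ x) with hSdef
    have hcoe : (S : Set W) = MulAction.orbit Γ x := Set.coe_toFinset _
    calc Nat.card W = Nat.card ↥(⊤ : Subgroup W) := (Subgroup.card_top).symm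
      _ = Nat.card ↥(Subgroup.closure ((S : Finset W) : Set W)) := by rw [hcoe, htop]
      _ ≤ p ^ S.card := CAB.card_closure_le_pow hp.pos hcomm hexp _
      _ = p ^ (Nat.card (MulAction.orbit Γ x)) := by
          rw [hSdef, Set.toFinset_card, Nat.card_eq_fintype_card]
  -- the homomorphisms ψ γ
  let ψ : Γ → (W →* W) := fun γ =>
    { toFun := fun x => x⁻¹ * φ γ x
      map_one' := by simp
      map_mul' := by
        intro x y
        simp only [map_mul, mul_inv_rev]
        rw [mul_comm (y⁻¹) (x⁻¹), mul_mul_mul_comm] }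
  have hψker : ∀ γ : Γ, (MulAction.fixedBy W γ) = ((ψ γ).ker : Set W) := by
    intro γ
    ext x
    simp only [MulAction.mem_fixedBy, hsmul, SetLike.mem_coe, MonoidHom.mem_ker]
    constructor
    · intro h; simp [ψ, h]
    · intro h
      have := inv_mul_eq_one.mp h
      exact this.symm
  have hψrange : ∀ γ : Γ, Nat.card ↥(ψ γ).range ≤ m := by
    intro γ
    refine le_trans (Subgroup.card_le_of_le ?_) (hcm γ)
    rintro y ⟨x, rfl⟩
    exact CAB.self_mem_commOfAut (φ γ) x
  have hkerbig : ∀ γ : Γ, Nat.card W ≤ m * Nat.card ↥(ψ γ).ker := by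
    intro γ
    calc Nat.card W = Nat.card (W ⧸ (ψ γ).ker) * Nat.card ↥(ψ γ).ker :=
        Subgroup.card_eq_card_quotient_mul_card_subgroup _
      _ = Nat.card ↥(ψ γ).range * Nat.card ↥(ψ γ).ker := by
          rw [Nat.card_congr (QuotientGroup.quotientKerEquivRange (ψ γ)).toEquiv]
      _ ≤ m * Nat.card ↥(ψ γ).ker := Nat.mul_le_mul_right _ (hψrange γ)
  -- Burnside
  letI : ∀ γ : Γ, Fintype (MulAction.fixedBy W γ) := fun γ => Fintype.ofFinite _
  letI : Fintype (MulAction.orbitRel.Quotient Γ W) := Fintype.ofFinite _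
  have hburn := MulAction.sum_card_fixedBy_eq_card_orbits_mul_card_group (G := Γ) (X := W)
  set n := Fintype.card (MulAction.orbitRel.Quotient Γ W) with hn
  set w := Nat.card W with hwdef
  have hwn : w ≤ m * n := by
    have h1 : ∀ γ : Γ, w ≤ m * Fintype.card (MulAction.fixedBy W γ) := by
      intro γ
      have : Fintype.card (MulAction.fixedBy W γ) = Nat.card ↥(ψ γ).ker := by
        rw [← Nat.card_eq_fintype_card]
        exact Nat.card_congr (Equiv.setCongr (hψker γ))
      rw [this]
      exact hkerbig γ
    have h2 : w * Fintype.card Γ ≤ (m * n) * Fintype.card Γ := by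
      calc w * Fintype.card Γ = ∑ _γ : Γ, w := by rw [Finset.sum_const, Finset.card_univ,
            smul_eq_mul, mul_comm]
        _ ≤ ∑ γ : Γ, m * Fintype.card (MulAction.fixedBy W γ) := Finset.sum_le_sum
            (fun γ _ => h1 γ)
        _ = m * ∑ γ : Γ, Fintype.card (MulAction.fixedBy W γ) := by rw [Finset.mul_sum]
        _ = m * (n * Fintype.card Γ) := by rw [hburn]
        _ = (m * n) * Fintype.card Γ := by ring
    exact Nat.le_of_mul_le_mul_right h2 Fintype.card_pos
  set k := Nat.clog p w with hk
  -- partition into orbits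
  have hsplit : 1 + (n - 1) * k ≤ w := by
    have hcardsum : w = ∑ ω : MulAction.orbitRel.Quotient Γ W,
        Nat.card ω.orbit := by
      rw [hwdef, Nat.card_eq_fintype_card, Fintype.card_congr
        (MulAction.selfEquivSigmaOrbits' Γ W), Fintype.card_sigma]
      exact Finset.sum_congr rfl (fun ω _ => by rw [Nat.card_eq_fintype_card])
    set pt : MulAction.orbitRel.Quotient Γ W := Quotient.mk'' 1 with hpt
    have hterm : ∀ ω : MulAction.orbitRel.Quotient Γ W, ω ≠ pt → k ≤ Nat.card ω.orbit := by
      intro ω hω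
      have hout : ω.orbit = MulAction.orbit Γ (Quotient.out ω) :=
        MulAction.orbitRel.Quotient.orbit_eq_orbit_out _ Quotient.out_eq'
      have hne1 : (Quotient.out ω : W) ≠ 1 := by
        intro h
        apply hω
        rw [hpt, ← h]
        exact (Quotient.out_eq' ω).symm
      rw [hout]
      exact (Nat.clog_le_iff_le_pow hp.one_lt).mpr (horb _ hne1)
    have hptpos : 1 ≤ Nat.card pt.orbit := by
      have h1 : (1 : W) ∈ pt.orbit := by
        rw [hpt, MulAction.orbitRel.Quotient.orbit_mk]
        exact MulAction.mem_orbit_self 1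
      haveI : Nonempty ↥pt.orbit := ⟨⟨1, h1⟩⟩
      exact Nat.one_le_iff_ne_zero.mpr Nat.card_pos.ne'
    calc 1 + (n - 1) * k ≤ Nat.card pt.orbit +
        ∑ ω ∈ Finset.univ.erase pt, Nat.card ω.orbit := by
          apply Nat.add_le_add hptpos
          calc (n - 1) * k = ∑ _ω ∈ Finset.univ.erase pt, k := by
                rw [Finset.sum_const, smul_eq_mul, Finset.card_erase_of_mem
                  (Finset.mem_univ pt), Finset.card_univ]
            _ ≤ ∑ ω ∈ Finset.univ.erase pt, Nat.card ω.orbit := Finset.sum_le_sum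
                (fun ω hω => hterm ω (Finset.ne_of_mem_erase hω))
      _ = ∑ ω : MulAction.orbitRel.Quotient Γ W, Nat.card ω.orbit :=
          Finset.add_sum_erase Finset.univ
            (fun ω : MulAction.orbitRel.Quotient Γ W => Nat.card ↥ω.orbit)
            (Finset.mem_univ pt)
      _ = w := hcardsum.symm
  -- p ≤ m via an essential element
  obtain ⟨γ₀, hγ₀⟩ := hess
  have hpm : p ≤ m := by
    have hx0 : ∃ x : W, φ γ₀ x ≠ x := by
      by_contra h
      push_neg at h
      exact hγ₀ (by ext x; simpa using h x)
    obtain ⟨x₀, hx₀⟩ := hx0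
    have hy1 : (ψ γ₀) x₀ ≠ 1 := by
      have : (ψ γ₀) x₀ = x₀⁻¹ * φ γ₀ x₀ := rfl
      rw [this]
      intro h
      exact hx₀ (inv_mul_eq_one.mp h).symm
    have hymem : (ψ γ₀) x₀ ∈ (ψ γ₀).range := ⟨x₀, rfl⟩
    obtain ⟨j, hj⟩ := hW ((ψ γ₀) x₀)
    have hdvd : orderOf ((ψ γ₀) x₀) ∣ p ^ j := orderOf_dvd_of_pow_eq_one hj
    obtain ⟨i, hile, hieq⟩ := (Nat.dvd_prime_pow hp).mp hdvd
    have hipos : 0 < i := by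
      rcases Nat.eq_zero_or_pos i with h | h
      · exact absurd (orderOf_eq_one_iff.mp (by rw [hieq, h, pow_zero])) hy1
      · exact h
    have hpdvd : p ∣ Nat.card ↥(ψ γ₀).range := by
      have h1 : p ∣ orderOf ((ψ γ₀) x₀) := hieq ▸ dvd_pow_self p hipos.ne'
      exact h1.trans (Subgroup.orderOf_dvd_natCard _ hymem)
    exact le_trans (Nat.le_of_dvd Nat.card_pos hpdvd) (hψrange γ₀)
  -- k ≤ 2 m
  haveI : Nonempty (MulAction.orbitRel.Quotient Γ W) := ⟨Quotient.mk'' 1⟩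
  have hnpos : 0 < n := Fintype.card_pos
  have hk2m : k ≤ 2 * m := by
    by_contra hkk
    push_neg at hkk
    rcases Nat.lt_or_ge n 2 with hn2 | hn2
    · have hn1 : n = 1 := by omega
      have hwm : w ≤ m := by rw [hn1, mul_one] at hwn; exact hwn
      have hwp : w ≤ p ^ m := by
        calc w ≤ m := hwm
          _ ≤ 2 ^ m := Nat.le_of_lt Nat.lt_two_pow_self
          _ ≤ p ^ m := Nat.pow_le_pow_left hp.two_le m
      have : k ≤ m := (Nat.clog_le_iff_le_pow hp.one_lt).mpr hwp
      omega
    · have h5 : 1 + (n - 1) * (2 * m + 1) ≤ w := by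
        refine le_trans ?_ hsplit
        have := Nat.mul_le_mul_left (n - 1) (by omega : 2 * m + 1 ≤ k)
        omega
      have h6 : 1 + (n - 1) * (2 * m + 1) ≤ m * n := le_trans h5 hwn
      have ht : 1 ≤ n - 1 := by omega
      set t := n - 1 with htdef
      have hnt : n = t + 1 := by omega
      rw [hnt] at h6
      nlinarith [h6, ht]
  calc Nat.card W = w := hwdef
    _ ≤ p ^ k := Nat.le_pow_clog hp.one_lt w
    _ ≤ p ^ (2 * m) := Nat.pow_le_pow_right hp.pos hk2m
    _ ≤ m ^ (2 * m) := Nat.pow_le_pow_left hpm _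


/-- The subgroup of `A` acting trivially on `M / N` (no quotient formed). -/
def trivAct {P : Type*} [Group P] (A : Subgroup (MulAut P)) (N M : Subgroup P)
    (hinvM : ∀ a ∈ A, ∀ x ∈ M, a x ∈ M) : Subgroup ↥A where
  carrier := {a : ↥A | ∀ x ∈ M, x⁻¹ * a.1 x ∈ N}
  one_mem' := by
    intro x _
    simpa using N.one_mem
  mul_mem' := by
    intro a b ha hb x hx
    have h1 : (↑(a * b) : MulAut P) x = a.1 (b.1 x) := rfl
    have h2 : x⁻¹ * a.1 (b.1 x) = (x⁻¹ * b.1 x) * ((b.1 x)⁻¹ * a.1 (b.1 x)) := by group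
    rw [h1, h2]
    exact N.mul_mem (hb x hx) (ha _ (hinvM b.1 b.2 x hx))
  inv_mem' := by
    intro a ha x hx
    have hy : (a.1⁻¹ : MulAut P) x ∈ M := hinvM a.1⁻¹ (A.inv_mem a.2) x hx
    have h1 := ha _ hy
    have h2 : a.1 ((a.1⁻¹ : MulAut P) x) = x := by
      have : (a.1 * a.1⁻¹) x = x := by rw [mul_inv_cancel]; rfl
      simpa using this
    rw [h2] at h1
    have h3 : x⁻¹ * (↑a⁻¹ : MulAut P) x = (((a.1⁻¹ : MulAut P) x)⁻¹ * x)⁻¹ := by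
      rw [mul_inv_rev, inv_inv]
      rfl
    rw [h3]
    exact N.inv_mem h1

theorem mem_trivAct {P : Type*} [Group P] {A : Subgroup (MulAut P)} {N M : Subgroup P}
    {hinvM : ∀ a ∈ A, ∀ x ∈ M, a x ∈ M} {a : ↥A} :
    a ∈ trivAct A N M hinvM ↔ ∀ x ∈ M, x⁻¹ * a.1 x ∈ N := Iff.rfl

/-- The subgroup of `A` fixing `N` pointwise. -/
def fixPt {P : Type*} [Group P] (A : Subgroup (MulAut P)) (N : Subgroup P) : Subgroup ↥A where
  carrier := {a : ↥A | ∀ x ∈ N, a.1 x = x}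
  one_mem' := fun x _ => rfl
  mul_mem' := by
    intro a b ha hb x hx
    have h1 : (↑(a * b) : MulAut P) x = a.1 (b.1 x) := rfl
    rw [h1, hb x hx, ha x hx]
  inv_mem' := by
    intro a ha x hx
    have h1 : a.1 x = x := ha x hx
    have h2 : (a.1⁻¹ : MulAut P) (a.1 x) = x := by
      have : (a.1⁻¹ * a.1) x = x := by rw [inv_mul_cancel]; rfl
      simpa using this
    calc (↑a⁻¹ : MulAut P) x = (a.1⁻¹ : MulAut P) (a.1 x) := by rw [h1]; rfl
      _ = x := h2

theorem mem_fixPt {P : Type*} [Group P] {A : Subgroup (MulAut P)} {N : Subgroup P} {a : ↥A} :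
    a ∈ fixPt A N ↔ ∀ x ∈ N, a.1 x = x := Iff.rfl

/-- A maximal chain of `A`-invariant subgroups of `P`. -/
theorem exists_chain (P : Type*) [Group P] [Finite P] (A : Subgroup (MulAut P)) :
    ∃ (s : ℕ) (N : ℕ → Subgroup P),
      N 0 = ⊥ ∧ N s = ⊤ ∧
      (∀ i, ∀ a ∈ A, ∀ x ∈ N i, a x ∈ N i) ∧
      (∀ i, i < s → N i < N (i + 1)) ∧
      (∀ i, i < s → ∀ L : Subgroup P, (∀ a ∈ A, ∀ x ∈ L, a x ∈ L) →
        N i < L → L ≤ N (i + 1) → L = N (i + 1)) := by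
  classical
  haveI : Finite (Subgroup P) :=
    Finite.of_injective (fun H : Subgroup P => (H : Set P)) SetLike.coe_injective
  have hInvTop : ∀ a ∈ A, ∀ x ∈ (⊤ : Subgroup P), a x ∈ (⊤ : Subgroup P) :=
    fun _ _ _ _ => trivial
  have hstep : ∀ K : Subgroup P, K ≠ ⊤ →
      ∃ L : Subgroup P, (∀ a ∈ A, ∀ x ∈ L, a x ∈ L) ∧ K < L ∧
        ∀ L', (∀ a ∈ A, ∀ x ∈ L', a x ∈ L') → K < L' → L' ≤ L → L' = L := by
    intro K hK
    set S : Set (Subgroup P) := {L | (∀ a ∈ A, ∀ x ∈ L, a x ∈ L) ∧ K < L} with hS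
    have hne : S.Nonempty := ⟨⊤, hInvTop, lt_top_iff_ne_top.mpr hK⟩
    obtain ⟨L, hLS, hmin⟩ := Set.Finite.exists_minimalFor id S (Set.toFinite S) hne
    refine ⟨L, hLS.1, hLS.2, ?_⟩
    intro L' hL'inv hKL' hL'L
    exact le_antisymm hL'L (hmin ⟨hL'inv, hKL'⟩ hL'L)
  have hstep' : ∀ K : Subgroup P, ∃ L : Subgroup P,
      (K = ⊤ → L = ⊤) ∧ (K ≠ ⊤ → ((∀ a ∈ A, ∀ x ∈ L, a x ∈ L) ∧ K < L ∧
        ∀ L', (∀ a ∈ A, ∀ x ∈ L', a x ∈ L') → K < L' → L' ≤ L → L' = L)) := by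
    intro K
    by_cases h : K = ⊤
    · exact ⟨⊤, fun _ => rfl, fun h' => absurd h h'⟩
    · obtain ⟨L, h1, h2, h3⟩ := hstep K h
      exact ⟨L, fun h' => absurd h' h, fun _ => ⟨h1, h2, h3⟩⟩
  choose next hnext1 hnext2 using hstep'
  let chain : ℕ → Subgroup P := fun n => Nat.rec ⊥ (fun _ K => next K) n
  have hchain0 : chain 0 = ⊥ := rfl
  have hchainsucc : ∀ i, chain (i + 1) = next (chain i) := fun _ => rfl
  have hInvChain : ∀ i, ∀ a ∈ A, ∀ x ∈ chain i, a x ∈ chain i := by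
    intro i
    induction i with
    | zero =>
      intro a ha x hx
      rw [hchain0, Subgroup.mem_bot] at hx ⊢
      rw [hx]
      exact map_one a
    | succ i _ =>
      rw [hchainsucc i]
      rcases eq_or_ne (chain i) ⊤ with h | h
      · rw [hnext1 (chain i) h]; exact hInvTop
      · exact (hnext2 (chain i) h).1
  have hltstep : ∀ i, chain i ≠ ⊤ → chain i < chain (i + 1) := by
    intro i h
    rw [hchainsucc i]
    exact (hnext2 (chain i) h).2.1
  have hminstep : ∀ i, chain i ≠ ⊤ → ∀ L, (∀ a ∈ A, ∀ x ∈ L, a x ∈ L) →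
      chain i < L → L ≤ chain (i + 1) → L = chain (i + 1) := by
    intro i h L hLinv h1 h2
    rw [hchainsucc i] at h2 ⊢
    exact (hnext2 (chain i) h).2.2 L hLinv h1 h2
  have hreach : ∃ i, chain i = ⊤ := by
    by_contra h
    push_neg at h
    have hgrow : ∀ i, i + 1 ≤ Nat.card ↥(chain i) := by
      intro i
      induction i with
      | zero =>
        rw [hchain0]
        simp [Subgroup.card_bot]
      | succ i ih =>
        have h1 : chain i < chain (i + 1) := hltstep i (h i)
        have h2 : Nat.card ↥(chain i) < Nat.card ↥(chain (i + 1)) := by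
          rcases lt_or_ge (Nat.card ↥(chain i)) (Nat.card ↥(chain (i + 1))) with hc | hc
          · exact hc
          · exact absurd (Subgroup.eq_of_le_of_card_ge h1.le hc) h1.ne
        omega
    have h3 := hgrow (Nat.card P)
    have h4 : Nat.card ↥(chain (Nat.card P)) ≤ Nat.card P := Subgroup.card_le_card_group _
    omega
  have inst : DecidablePred (fun i => chain i = ⊤) := fun _ => Classical.propDecidable _
  refine ⟨@Nat.find _ inst hreach, chain, hchain0, @Nat.find_spec _ inst hreach, hInvChain,
    ?_, ?_⟩
  · intro i hi
    exact hltstep i (@Nat.find_min _ inst hreach i hi)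
  · intro i hi L hinv h1 h2
    exact hminstep i (@Nat.find_min _ inst hreach i hi) L hinv h1 h2


theorem aut_apply_inv_apply {P : Type*} [Group P] (a : MulAut P) (x : P) : a (a⁻¹ x) = x := by
  have h : (a * a⁻¹) x = x := by rw [mul_inv_cancel]; rfl
  simpa using h

theorem aut_inv_apply_apply {P : Type*} [Group P] (a : MulAut P) (x : P) : a⁻¹ (a x) = x := by
  have h : (a⁻¹ * a) x = x := by rw [inv_mul_cancel]; rfl
  simpa using h

theorem inv_mem_iff_of_invariant {P : Type*} [Group P] {A : Subgroup (MulAut P)}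
    {N : Subgroup P} (hinvN : ∀ a ∈ A, ∀ x ∈ N, a x ∈ N) {a : MulAut P} (ha : a ∈ A)
    (x : P) : a x ∈ N ↔ x ∈ N := by
  constructor
  · intro h
    have := hinvN a⁻¹ (A.inv_mem ha) _ h
    rwa [aut_inv_apply_apply] at this
  · exact hinvN a ha x

theorem level_index_bound {p m : ℕ} (hp : p.Prime) (hm : 0 < m)
    {P : Type*} [Group P] [Finite P] (hP : IsPGroup p P) (A : Subgroup (MulAut P))
    (hmA : ∀ a ∈ A, Nat.card ↥(commOfAut a) ≤ m)
    {N M : Subgroup P}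
    (hinvN : ∀ a ∈ A, ∀ x ∈ N, a x ∈ N) (hinvM : ∀ a ∈ A, ∀ x ∈ M, a x ∈ M)
    (hNM : N < M)
    (hminimal : ∀ L : Subgroup P, (∀ a ∈ A, ∀ x ∈ L, a x ∈ L) → N < L → L ≤ M → L = M) :
    (trivAct A N M hinvM).index ≤ (m ^ (2 * m)) ^ (m ^ (2 * m)) := by
  classical
  by_cases hAt : trivAct A N M hinvM = ⊤
  · rw [hAt, Subgroup.index_top]
    exact Nat.one_le_iff_ne_zero.mpr (pow_ne_zero _ (pow_ne_zero _ (by omega)))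
  haveI : Fact p.Prime := ⟨hp⟩
  have hNleM : N ≤ M := hNM.le
  have hMp : IsPGroup p ↥M := hP.to_subgroup M
  haveI : Group.IsNilpotent ↥M := hMp.isNilpotent
  set H : Subgroup ↥M := N.subgroupOf M with hH
  have hHne : H ≠ ⊤ := by
    obtain ⟨y, hyM, hyN⟩ := SetLike.exists_of_lt hNM
    intro h
    apply hyN
    have h2 : (⟨y, hyM⟩ : ↥M) ∈ H := h ▸ Subgroup.mem_top _
    exact Subgroup.mem_subgroupOf.mp h2
  -- H is normal in M, via the normalizer condition and minimality
  haveI hnorm : H.Normal := by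
    rw [← Subgroup.normalizer_eq_top_iff]
    set L : Subgroup P := Subgroup.map M.subtype (Subgroup.normalizer (H : Set ↥M)) with hL
    have hLM : L ≤ M := Subgroup.map_subtype_le _
    have hNL : N ≤ L := by
      intro x hx
      exact ⟨⟨x, hNleM hx⟩, Subgroup.le_normalizer (by rwa [Subgroup.mem_subgroupOf]), rfl⟩
    have hHnorm : H < (Subgroup.normalizer (H : Set ↥M)) :=
      (normalizerCondition_of_isNilpotent (G := ↥M)) H (lt_top_iff_ne_top.mpr hHne)
    have hNltL : N < L := by
      obtain ⟨z, hz1, hz2⟩ := SetLike.exists_of_lt hHnorm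
      refine lt_of_le_of_ne hNL ?_
      intro h
      apply hz2
      have h3 : z.1 ∈ L := ⟨z, hz1, rfl⟩
      rw [← h] at h3
      rwa [Subgroup.mem_subgroupOf]
    have hLinv : ∀ a ∈ A, ∀ x ∈ L, a x ∈ L := by
      intro a ha y hy
      obtain ⟨z, hz, rfl⟩ := hy
      refine ⟨⟨a z.1, hinvM a ha _ z.2⟩, ?_, rfl⟩
      rw [SetLike.mem_coe, Subgroup.mem_normalizer_iff]
      rw [SetLike.mem_coe, Subgroup.mem_normalizer_iff] at hz
      intro h
      have h₀M : (a⁻¹ : MulAut P) h.1 ∈ M := hinvM a⁻¹ (A.inv_mem ha) _ h.2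
      obtain ⟨h₀, hh₀⟩ : ∃ h₀ : ↥M, h₀.1 = (a⁻¹ : MulAut P) h.1 := ⟨⟨_, h₀M⟩, rfl⟩
      have hzh : (z * h₀ * z⁻¹).1 = z.1 * h₀.1 * z.1⁻¹ := rfl
      have hval : ((⟨a z.1, hinvM a ha _ z.2⟩ : ↥M) * h * (⟨a z.1, hinvM a ha _ z.2⟩ : ↥M)⁻¹).1
          = a ((z * h₀ * z⁻¹).1) := by
        show a z.1 * h.1 * (a z.1)⁻¹ = a (z.1 * h₀.1 * z.1⁻¹)
        rw [map_mul, map_mul, map_inv, hh₀, aut_apply_inv_apply]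
      have hmemH : ∀ (u : ↥M), u ∈ H ↔ u.1 ∈ N := fun u => Subgroup.mem_subgroupOf
      have e1 : ((⟨a z.1, hinvM a ha _ z.2⟩ : ↥M) * h * (⟨a z.1, hinvM a ha _ z.2⟩ : ↥M)⁻¹ ∈ H)
          ↔ a ((z * h₀ * z⁻¹).1) ∈ N := by rw [hmemH, hval]
      rw [e1, inv_mem_iff_of_invariant hinvN ha, ← hmemH (z * h₀ * z⁻¹), ← hz h₀, hmemH h₀,
        hh₀, inv_mem_iff_of_invariant hinvN (A.inv_mem ha)]
      exact hmemH h
    have hLM' : L = M := hminimal L hLinv hNltL hLM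
    rw [eq_top_iff]
    intro z _
    have hz : z.1 ∈ L := by rw [hLM']; exact z.2
    obtain ⟨u, hu, huz⟩ := hz
    have : u = z := Subtype.ext huz
    rwa [← this]
  haveI : Finite (MulAut P) :=
    Finite.of_injective (fun e : MulAut P => (e : P → P)) DFunLike.coe_injective
  -- the quotient W = M / N
  set W := ↥M ⧸ H with hWdef
  have hmkmem : ∀ x : ↥M, ((QuotientGroup.mk x : W) = 1) ↔ x.1 ∈ N := by
    intro x
    rw [QuotientGroup.eq_one_iff]
    exact Subgroup.mem_subgroupOf
  haveI hWnt : Nontrivial W := by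
    obtain ⟨y, hyM, hyN⟩ := SetLike.exists_of_lt hNM
    refine ⟨⟨QuotientGroup.mk ⟨y, hyM⟩, 1, fun h => hyN ((hmkmem _).mp h)⟩⟩
  have hWp : IsPGroup p W := hMp.to_quotient H
  -- restriction of a ∈ A to M
  let res : ↥A → (↥M →* ↥M) := fun a =>
    { toFun := fun x => ⟨a.1 x.1, hinvM a.1 a.2 x.1 x.2⟩
      map_one' := by ext; simp
      map_mul' := by intro x y; ext; simp }
  -- induced endomorphism of W
  have hliftker : ∀ a : ↥A, ∀ x : ↥M, x ∈ H →
      (QuotientGroup.mk' H).comp (res a) x = 1 := by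
    intro a x hx
    show (QuotientGroup.mk (res a x) : W) = 1
    rw [hmkmem]
    show a.1 x.1 ∈ N
    rw [Subgroup.mem_subgroupOf] at hx
    exact hinvN a.1 a.2 x.1 hx
  let F : ↥A → (W →* W) := fun a => QuotientGroup.lift H ((QuotientGroup.mk' H).comp (res a))
    (hliftker a)
  have hFmk : ∀ (a : ↥A) (x : ↥M), F a (QuotientGroup.mk x) = QuotientGroup.mk (res a x) :=
    fun a x => rfl
  have hFcomp : ∀ (a b : ↥A) (w : W), F (a * b) w = F a (F b w) := by
    intro a b w
    induction w using QuotientGroup.induction_on with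
    | _ x => rfl
  have hFone : ∀ w : W, F 1 w = w := by
    intro w
    induction w using QuotientGroup.induction_on with
    | _ x => rfl
  let φ : ↥A →* MulAut W :=
    { toFun := fun a =>
        { toFun := F a
          invFun := F a⁻¹
          left_inv := fun w => by rw [← hFcomp, inv_mul_cancel, hFone]
          right_inv := fun w => by rw [← hFcomp, mul_inv_cancel, hFone]
          map_mul' := (F a).map_mul }
      map_one' := by ext w; exact hFone w
      map_mul' := by intro a b; ext w; exact hFcomp a b w }
  have hφmk : ∀ (a : ↥A) (x : ↥M), φ a (QuotientGroup.mk x) = QuotientGroup.mk (res a x) :=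
    fun a x => rfl
  -- extracting commutator membership from a fixed coset
  have hmkfix : ∀ (c : ↥A) (x : P) (hx : x ∈ M),
      (QuotientGroup.mk (res c ⟨x, hx⟩) : W) = (QuotientGroup.mk (⟨x, hx⟩ : ↥M) : W) →
      x⁻¹ * c.1 x ∈ N := by
    intro c x hx h
    have h3 : (res c ⟨x, hx⟩)⁻¹ * ⟨x, hx⟩ ∈ H := QuotientGroup.eq.mp h
    rw [Subgroup.mem_subgroupOf] at h3
    have h4 : (((res c ⟨x, hx⟩)⁻¹ * (⟨x, hx⟩ : ↥M)) : ↥M).1 = (c.1 x)⁻¹ * x := rfl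
    rw [h4] at h3
    have h5 := N.inv_mem h3
    rwa [mul_inv_rev, inv_inv] at h5
  -- every invariant subgroup of W is ⊥ or ⊤
  have hirrW : ∀ V : Subgroup W, V ≠ ⊥ → (∀ γ : ↥A, ∀ w ∈ V, φ γ w ∈ V) → V = ⊤ := by
    intro V hVne hVinv
    set L' : Subgroup P := Subgroup.map M.subtype (V.comap (QuotientGroup.mk' H)) with hL'
    have hL'M : L' ≤ M := Subgroup.map_subtype_le _
    have hNL' : N ≤ L' := by
      intro x hx
      refine ⟨⟨x, hNleM hx⟩, ?_, rfl⟩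
      rw [SetLike.mem_coe, Subgroup.mem_comap]
      have h1 : (QuotientGroup.mk' H) (⟨x, hNleM hx⟩ : ↥M) = 1 := by
        show (QuotientGroup.mk _ : W) = 1
        rw [hmkmem]
        exact hx
      rw [h1]
      exact V.one_mem
    have hinvL' : ∀ a ∈ A, ∀ x ∈ L', a x ∈ L' := by
      intro a ha y hy
      obtain ⟨z, hz, rfl⟩ := hy
      rw [SetLike.mem_coe, Subgroup.mem_comap] at hz
      refine ⟨res ⟨a, ha⟩ z, ?_, rfl⟩
      rw [SetLike.mem_coe, Subgroup.mem_comap]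
      have h1 : (QuotientGroup.mk' H) (res ⟨a, ha⟩ z) = φ ⟨a, ha⟩ ((QuotientGroup.mk' H) z) := by
        induction z using Subtype.rec with
        | _ z hzM => rfl
      rw [h1]
      exact hVinv _ _ hz
    have hNltL' : N < L' := by
      refine lt_of_le_of_ne hNL' ?_
      intro hEq
      obtain ⟨w, hwV, hw1⟩ := V.bot_or_exists_ne_one.resolve_left hVne
      obtain ⟨x, rfl⟩ := QuotientGroup.mk'_surjective H w
      have hx1 : x.1 ∈ L' :=
        ⟨x, by rw [SetLike.mem_coe, Subgroup.mem_comap]; exact hwV, rfl⟩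
      rw [← hEq] at hx1
      apply hw1
      show (QuotientGroup.mk x : W) = 1
      rw [hmkmem]
      exact hx1
    have hL'M' : L' = M := hminimal L' hinvL' hNltL' hL'M
    rw [eq_top_iff]
    intro w _
    obtain ⟨x, rfl⟩ := QuotientGroup.mk'_surjective H w
    have h1 : x.1 ∈ L' := by rw [hL'M']; exact x.2
    obtain ⟨u, hu, hux⟩ := h1
    rw [SetLike.mem_coe, Subgroup.mem_comap] at hu
    have h2 : u = x := Subtype.ext hux
    rwa [← h2]
  -- commutator bound on W
  have hcmW : ∀ a : ↥A, Nat.card ↥(commOfAut (φ a)) ≤ m := by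
    intro a
    have hsub : commOfAut (φ a) ≤
        Subgroup.map (QuotientGroup.mk' H) ((commOfAut a.1).subgroupOf M) := by
      apply (Subgroup.closure_le _).mpr
      rintro v ⟨w, hvw⟩
      obtain ⟨x, rfl⟩ := QuotientGroup.mk'_surjective H w
      subst hvw
      refine ⟨x⁻¹ * res a x, ?_, ?_⟩
      · rw [SetLike.mem_coe, Subgroup.mem_subgroupOf]
        show x.1⁻¹ * a.1 x.1 ∈ commOfAut a.1
        exact self_mem_commOfAut a.1 x.1
      · rw [map_mul, map_inv]
        rfl
    calc Nat.card ↥(commOfAut (φ a))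
        ≤ Nat.card ↥(Subgroup.map (QuotientGroup.mk' H) ((commOfAut a.1).subgroupOf M)) :=
          Subgroup.card_le_of_le hsub
      _ ≤ Nat.card ↥((commOfAut a.1).subgroupOf M) := card_map_le _ _
      _ ≤ Nat.card ↥(commOfAut a.1) := card_subgroupOf_le _ _
      _ ≤ m := hmA a.1 a.2
  -- essential
  have hessW : ∃ a : ↥A, φ a ≠ 1 := by
    have h1 : ∃ a : ↥A, a ∉ trivAct A N M hinvM := by
      by_contra h
      push_neg at h
      exact hAt (eq_top_iff.mpr (fun a _ => h a))
    obtain ⟨a, haT⟩ := h1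
    refine ⟨a, fun hone => haT ?_⟩
    rw [mem_trivAct]
    intro x hx
    apply hmkfix a x hx
    rw [← hφmk, hone]
    rfl
  have hWle : Nat.card W ≤ m ^ (2 * m) := key_level_bound hp hm hWp φ hirrW hcmW hessW
  -- elements of trivAct act trivially on W
  have hAtFix : ∀ c : ↥A, c ∈ trivAct A N M hinvM → ∀ w : W, φ c w = w := by
    intro c hc w
    induction w using QuotientGroup.induction_on with
    | _ x =>
      rw [hφmk]
      show (QuotientGroup.mk _ : W) = QuotientGroup.mk x
      rw [QuotientGroup.eq]
      rw [Subgroup.mem_subgroupOf]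
      have h4 : (((res c x)⁻¹ * x) : ↥M).1 = (c.1 x.1)⁻¹ * x.1 := rfl
      rw [h4]
      have h5 := N.inv_mem (hc x.1 x.2)
      rwa [mul_inv_rev, inv_inv] at h5
  have hfunwd : ∀ a b : ↥A, a⁻¹ * b ∈ trivAct A N M hinvM → (φ a : W → W) = (φ b : W → W) := by
    intro a b hab
    funext w
    have h1 : φ b w = φ a (φ (a⁻¹ * b) w) := by
      rw [← MulAut.mul_apply, ← map_mul, mul_inv_cancel_left]
    rw [h1, hAtFix _ hab]
  let J : (↥A ⧸ trivAct A N M hinvM) → (W → W) :=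
    fun q => Quotient.liftOn' q (fun a => (φ a : W → W)) (by
      intro a b hab
      rw [QuotientGroup.leftRel_apply] at hab
      exact hfunwd a b hab)
  have hJmk : ∀ a : ↥A, J (QuotientGroup.mk a) = (φ a : W → W) := fun _ => rfl
  have hJinj : Function.Injective J := by
    intro q1 q2 h
    induction q1 using QuotientGroup.induction_on with
    | _ a =>
      induction q2 using QuotientGroup.induction_on with
      | _ b =>
        rw [hJmk, hJmk] at h
        rw [QuotientGroup.eq]
        rw [mem_trivAct]
        intro x hx
        apply hmkfix (a⁻¹ * b) x hx
        rw [← hφmk]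
        have h1 : φ (a⁻¹ * b) (QuotientGroup.mk ⟨x, hx⟩) =
            φ a⁻¹ (φ b (QuotientGroup.mk (⟨x, hx⟩ : ↥M))) := by
          rw [map_mul]
          rfl
        rw [h1, ← congrFun h (QuotientGroup.mk (⟨x, hx⟩ : ↥M))]
        have h2 : φ a⁻¹ (φ a (QuotientGroup.mk (⟨x, hx⟩ : ↥M))) =
            φ (a⁻¹ * a) (QuotientGroup.mk (⟨x, hx⟩ : ↥M)) := by
          rw [map_mul]
          rfl
        rw [h2, inv_mul_cancel, map_one]
        rfl
  have hidx : (trivAct A N M hinvM).index ≤ Nat.card (W → W) := by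
    rw [Subgroup.index_eq_card]
    exact Nat.card_le_card_of_injective J hJinj
  have hcard : Nat.card (W → W) = Nat.card W ^ Nat.card W := Nat.card_fun
  calc (trivAct A N M hinvM).index ≤ Nat.card W ^ Nat.card W := by rw [← hcard]; exact hidx
    _ ≤ (m ^ (2 * m)) ^ Nat.card W := Nat.pow_le_pow_left hWle _
    _ ≤ (m ^ (2 * m)) ^ (m ^ (2 * m)) :=
        Nat.pow_le_pow_right (Nat.one_le_iff_ne_zero.mpr (pow_ne_zero _ (by omega))) hWle

end CAB

theorem card_automorphisms_bounded :
    ∃ f : ℕ → ℕ, ∀ (m p : ℕ), 0 < m → p.Prime →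
      ∀ (P : Type) [Group P] [Finite P], IsPGroup p P →
        ∀ A : Subgroup (MulAut P), ¬ p ∣ Nat.card A →
          (∀ a ∈ A, Nat.card (commOfAut a) ≤ m) → Nat.card A ≤ f m := by
  classical
  refine ⟨fun m => ((m ^ (2 * m)) ^ (m ^ (2 * m))) ^ (2 * Nat.log 2 m), ?_⟩
  intro m p hm hp P _ _ hP A hpA hmA
  haveI : Finite (MulAut P) :=
    Finite.of_injective (fun e : MulAut P => (e : P → P)) DFunLike.coe_injective
  obtain ⟨s, N, hN0, hNs, hNinv, hNlt, hNmin⟩ := CAB.exists_chain P A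
  set T := (m ^ (2 * m)) ^ (m ^ (2 * m)) with hT
  have hT1 : 1 ≤ T := Nat.one_le_iff_ne_zero.mpr (pow_ne_zero _ (pow_ne_zero _ (by omega)))
  set At : ℕ → Subgroup ↥A := fun i => CAB.trivAct A (N i) (N (i + 1)) (hNinv (i + 1))
    with hAtdef
  set Bf : ℕ → Subgroup ↥A := fun i => CAB.fixPt A (N i) with hBfdef
  -- level index bound
  have hlevel : ∀ i, i < s → (At i).index ≤ T := by
    intro i hi
    exact CAB.level_index_bound hp hm hP A hmA (hNinv i) (hNinv (i + 1)) (hNlt i hi)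
      (fun L hL h1 h2 => hNmin i hi L hL h1 h2)
  -- monotonicity facts
  have hBmono : ∀ i, i < s → Bf (i + 1) ≤ Bf i := by
    intro i hi a ha
    rw [hBfdef, CAB.mem_fixPt] at ha ⊢
    intro x hx
    exact ha x ((hNlt i hi).le hx)
  have hBAt : ∀ i, Bf (i + 1) ≤ At i := by
    intro i a ha
    rw [hBfdef, CAB.mem_fixPt] at ha
    rw [hAtdef, CAB.mem_trivAct]
    intro x hx
    rw [ha x hx, inv_mul_cancel]
    exact (N i).one_mem
  -- the δ-step: trivial action on level i plus pointwise fixing below extends upwards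
  have hdelta : ∀ i, Bf i ⊓ At i ≤ Bf (i + 1) := by
    intro i c hc
    obtain ⟨hc1, hc2⟩ := Subgroup.mem_inf.mp hc
    rw [hBfdef, CAB.mem_fixPt] at hc1 ⊢
    rw [hAtdef, CAB.mem_trivAct] at hc2
    have h1 : c ^ (Nat.card ↥A) = 1 := pow_card_eq_one'
    have hord : (c.1 : MulAut P) ^ (Nat.card ↥A) = 1 := by
      rw [← SubmonoidClass.coe_pow, h1, OneMemClass.coe_one]
    exact CAB.fix_of_fix_step hp hP c.1 hord hpA hc1 hc2
  -- one step of the telescoping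
  have hstep : ∀ i, i < s → Nat.card ↥(Bf i) ≤ (At i).index * Nat.card ↥(Bf (i + 1)) := by
    intro i hi
    have hle : Bf (i + 1) ≤ Bf i := hBmono i hi
    have h1 : Nat.card ↥(Bf i) =
        Nat.card (↥(Bf i) ⧸ (Bf (i + 1)).subgroupOf (Bf i)) *
          Nat.card ↥((Bf (i + 1)).subgroupOf (Bf i)) :=
      Subgroup.card_eq_card_quotient_mul_card_subgroup _
    have h2 : Nat.card ↥((Bf (i + 1)).subgroupOf (Bf i)) = Nat.card ↥(Bf (i + 1)) :=
      Nat.card_congr (Subgroup.subgroupOfEquivOfLe hle).toEquiv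
    have h3 : Nat.card (↥(Bf i) ⧸ (Bf (i + 1)).subgroupOf (Bf i)) ≤ (At i).index := by
      rw [Subgroup.index_eq_card]
      let g : (↥(Bf i) ⧸ (Bf (i + 1)).subgroupOf (Bf i)) → (↥A ⧸ At i) :=
        fun q => Quotient.liftOn' q (fun b => (QuotientGroup.mk b.1 : ↥A ⧸ At i)) (by
          intro a b hab
          rw [QuotientGroup.leftRel_apply] at hab
          rw [Subgroup.mem_subgroupOf] at hab
          apply Quotient.sound'
          rw [QuotientGroup.leftRel_apply]
          exact hBAt i hab)
      have hginj : Function.Injective g := by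
        intro q1 q2 h
        induction q1 using Quotient.inductionOn' with
        | _ a =>
          induction q2 using Quotient.inductionOn' with
          | _ b =>
            have h' : (QuotientGroup.mk a.1 : ↥A ⧸ At i) = QuotientGroup.mk b.1 := h
            rw [QuotientGroup.eq] at h'
            apply Quotient.sound'
            rw [QuotientGroup.leftRel_apply, Subgroup.mem_subgroupOf]
            have hm1 : a.1⁻¹ * b.1 ∈ Bf i := (Bf i).mul_mem ((Bf i).inv_mem a.2) b.2
            exact hdelta i (Subgroup.mem_inf.mpr ⟨hm1, h'⟩)
      exact Nat.card_le_card_of_injective g hginj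
    calc Nat.card ↥(Bf i) = Nat.card (↥(Bf i) ⧸ (Bf (i + 1)).subgroupOf (Bf i)) *
          Nat.card ↥((Bf (i + 1)).subgroupOf (Bf i)) := h1
      _ = Nat.card (↥(Bf i) ⧸ (Bf (i + 1)).subgroupOf (Bf i)) * Nat.card ↥(Bf (i + 1)) := by
          rw [h2]
      _ ≤ (At i).index * Nat.card ↥(Bf (i + 1)) := Nat.mul_le_mul_right _ h3
  have hstep1 : ∀ i, i < s → At i = ⊤ → Nat.card ↥(Bf i) ≤ Nat.card ↥(Bf (i + 1)) := by
    intro i _ htop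
    apply Subgroup.card_le_of_le
    intro c hc
    exact hdelta i (Subgroup.mem_inf.mpr ⟨hc, by rw [htop]; trivial⟩)
  -- telescoping
  have htel : ∀ t j, j + t = s → Nat.card ↥(Bf j) ≤
      T ^ (((Finset.Ico j s).filter (fun i => At i ≠ ⊤)).card) := by
    intro t
    induction t with
    | zero =>
      intro j hj
      have hjs : j = s := by omega
      subst hjs
      have hBs : Bf j = ⊥ := by
        rw [eq_bot_iff]
        intro c hc
        rw [hBfdef, CAB.mem_fixPt] at hc
        rw [Subgroup.mem_bot]
        have hc1 : c.1 = 1 := by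
          ext x
          have hx : x ∈ N j := by rw [hNs]; trivial
          simpa using hc x hx
        exact Subtype.ext hc1
      rw [hBs, Subgroup.card_bot]
      exact Nat.one_le_iff_ne_zero.mpr (pow_ne_zero _ (by omega))
    | succ t ih =>
      intro j hj
      have hjs : j < s := by omega
      have hih := ih (j + 1) (by omega)
      have hIco : Finset.Ico j s = insert j (Finset.Ico (j + 1) s) :=
        (Finset.insert_Ico_add_one_left_eq_Ico hjs).symm
      by_cases hAtj : At j = ⊤
      · have hfil : ((Finset.Ico j s).filter (fun i => At i ≠ ⊤)).card =
            ((Finset.Ico (j + 1) s).filter (fun i => At i ≠ ⊤)).card := by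
          rw [hIco, Finset.filter_insert, if_neg (by simpa using hAtj)]
        calc Nat.card ↥(Bf j) ≤ Nat.card ↥(Bf (j + 1)) := hstep1 j hjs hAtj
          _ ≤ T ^ (((Finset.Ico (j + 1) s).filter (fun i => At i ≠ ⊤)).card) := hih
          _ = T ^ (((Finset.Ico j s).filter (fun i => At i ≠ ⊤)).card) := by rw [hfil]
      · have hfil : ((Finset.Ico j s).filter (fun i => At i ≠ ⊤)).card =
            ((Finset.Ico (j + 1) s).filter (fun i => At i ≠ ⊤)).card + 1 := by
          rw [hIco, Finset.filter_insert, if_pos hAtj,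
            Finset.card_insert_of_notMem (by simp)]
        calc Nat.card ↥(Bf j) ≤ (At j).index * Nat.card ↥(Bf (j + 1)) := hstep j hjs
          _ ≤ T * T ^ (((Finset.Ico (j + 1) s).filter (fun i => At i ≠ ⊤)).card) :=
              Nat.mul_le_mul (hlevel j hjs) hih
          _ = T ^ (((Finset.Ico (j + 1) s).filter (fun i => At i ≠ ⊤)).card + 1) := by
              rw [pow_succ, mul_comm]
          _ = T ^ (((Finset.Ico j s).filter (fun i => At i ≠ ⊤)).card) := by rw [hfil]
  -- per-element bound on the number of levels where it acts nontrivially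
  letI := Fintype.ofFinite ↥A
  have hJle : ∀ a : ↥A, ((Finset.range s).filter (fun i => a ∉ At i)).card ≤ Nat.log 2 m := by
    intro a
    have hgrow : ∀ u, u ≤ s →
        2 ^ (((Finset.range u).filter (fun i => a ∉ At i)).card) ≤
          Nat.card ↥(commOfAut a.1 ⊓ N u) := by
      intro u
      induction u with
      | zero =>
        intro _
        rw [Finset.range_zero, Finset.filter_empty, Finset.card_empty, pow_zero]
        exact Nat.one_le_iff_ne_zero.mpr Nat.card_pos.ne'
      | succ u ih =>
        intro hu
        have hu' : u ≤ s := by omega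
        have hus : u < s := by omega
        have hle2 : commOfAut a.1 ⊓ N u ≤ commOfAut a.1 ⊓ N (u + 1) :=
          inf_le_inf_left _ (hNlt u hus).le
        by_cases hmem : a ∉ At u
        · obtain ⟨x, hxM, hxN⟩ : ∃ x ∈ N (u + 1), x⁻¹ * a.1 x ∉ N u := by
            by_contra hcon
            push_neg at hcon
            exact hmem ((CAB.mem_trivAct).mpr hcon)
          have helem : x⁻¹ * a.1 x ∈ commOfAut a.1 ⊓ N (u + 1) :=
            Subgroup.mem_inf.mpr ⟨CAB.self_mem_commOfAut _ _,
              (N (u + 1)).mul_mem ((N (u + 1)).inv_mem hxM) (hNinv (u + 1) a.1 a.2 x hxM)⟩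
          have hneq : commOfAut a.1 ⊓ N u ≠ commOfAut a.1 ⊓ N (u + 1) := by
            intro hEq
            apply hxN
            have h5 : x⁻¹ * a.1 x ∈ commOfAut a.1 ⊓ N u := by rw [hEq]; exact helem
            exact (Subgroup.mem_inf.mp h5).2
          have hlt2 : Nat.card ↥(commOfAut a.1 ⊓ N u) <
              Nat.card ↥(commOfAut a.1 ⊓ N (u + 1)) := by
            rcases lt_or_ge (Nat.card ↥(commOfAut a.1 ⊓ N u))
              (Nat.card ↥(commOfAut a.1 ⊓ N (u + 1))) with hc | hc
            · exact hc
            · exact absurd (Subgroup.eq_of_le_of_card_ge hle2 hc) hneq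
          have hdou : 2 * Nat.card ↥(commOfAut a.1 ⊓ N u) ≤
              Nat.card ↥(commOfAut a.1 ⊓ N (u + 1)) := by
            obtain ⟨c, hc⟩ := Subgroup.card_dvd_of_le hle2
            have hcpos : 0 < Nat.card ↥(commOfAut a.1 ⊓ N u) := Nat.card_pos
            have hc2 : 2 ≤ c := by
              rcases c with _ | c
              · rw [hc] at hlt2; omega
              · rcases c with _ | c
                · rw [hc] at hlt2; omega
                · omega
            calc 2 * Nat.card ↥(commOfAut a.1 ⊓ N u) ≤
                c * Nat.card ↥(commOfAut a.1 ⊓ N u) :=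
                  Nat.mul_le_mul_right _ hc2
              _ = Nat.card ↥(commOfAut a.1 ⊓ N u) * c := mul_comm _ _
              _ = Nat.card ↥(commOfAut a.1 ⊓ N (u + 1)) := hc.symm
          have hfil : ((Finset.range (u + 1)).filter (fun i => a ∉ At i)).card =
              ((Finset.range u).filter (fun i => a ∉ At i)).card + 1 := by
            rw [Finset.range_add_one, Finset.filter_insert, if_pos hmem,
              Finset.card_insert_of_notMem (by simp)]
          rw [hfil, pow_succ]
          calc 2 ^ (((Finset.range u).filter (fun i => a ∉ At i)).card) * 2 ≤
              Nat.card ↥(commOfAut a.1 ⊓ N u) * 2 := Nat.mul_le_mul_right _ (ih hu')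
            _ = 2 * Nat.card ↥(commOfAut a.1 ⊓ N u) := mul_comm _ _
            _ ≤ Nat.card ↥(commOfAut a.1 ⊓ N (u + 1)) := hdou
        · have hfil : ((Finset.range (u + 1)).filter (fun i => a ∉ At i)).card =
              ((Finset.range u).filter (fun i => a ∉ At i)).card := by
            rw [Finset.range_add_one, Finset.filter_insert, if_neg hmem]
          rw [hfil]
          exact le_trans (ih hu') (Subgroup.card_le_of_le hle2)
    have h2m : 2 ^ (((Finset.range s).filter (fun i => a ∉ At i)).card) ≤ m := by
      have h3 := hgrow s le_rfl
      rw [hNs, inf_top_eq] at h3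
      exact le_trans h3 (hmA a.1 a.2)
    exact (Nat.le_log_iff_pow_le one_lt_two (by omega)).mpr h2m
  -- averaging: at most 2 log₂ m essential levels
  have hEss : ((Finset.range s).filter (fun i => At i ≠ ⊤)).card ≤ 2 * Nat.log 2 m := by
    have hcApos : 0 < Nat.card ↥A := Nat.card_pos
    have hcnt : ∀ i, (Finset.univ.filter (fun a : ↥A => a ∉ At i)).card +
        Nat.card ↥(At i) = Nat.card ↥A := by
      intro i
      have h1 : (Finset.univ.filter (fun a : ↥A => a ∈ At i)).card = Nat.card ↥(At i) := by
        rw [Nat.card_eq_fintype_card, Fintype.card_subtype]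
      rw [← h1, Nat.card_eq_fintype_card, ← Finset.card_univ, Nat.add_comm]
      exact Finset.card_filter_add_card_filter_not _
    have hhalf : ∀ i, At i ≠ ⊤ →
        Nat.card ↥A ≤ 2 * (Finset.univ.filter (fun a : ↥A => a ∉ At i)).card := by
      intro i hi
      have hidx : Nat.card ↥A = (At i).index * Nat.card ↥(At i) := by
        rw [Subgroup.card_eq_card_quotient_mul_card_subgroup (At i), Subgroup.index_eq_card]
      have hge2 : 2 ≤ (At i).index := by
        have h1 : (At i).index ≠ 1 := fun h => hi (Subgroup.index_eq_one.mp h)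
        have h2 : (At i).index ≠ 0 := Subgroup.index_ne_zero_of_finite
        omega
      have h2c : 2 * Nat.card ↥(At i) ≤ Nat.card ↥A := by
        rw [hidx]
        exact Nat.mul_le_mul_right _ hge2
      have h3 := hcnt i
      omega
    have hdouble : ∑ i ∈ Finset.range s, (Finset.univ.filter (fun a : ↥A => a ∉ At i)).card =
        ∑ a : ↥A, ((Finset.range s).filter (fun i => a ∉ At i)).card := by
      simp_rw [Finset.card_filter]
      rw [Finset.sum_comm]
    have hupper : ∑ i ∈ Finset.range s, (Finset.univ.filter (fun a : ↥A => a ∉ At i)).card ≤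
        Nat.card ↥A * Nat.log 2 m := by
      rw [hdouble]
      calc ∑ a : ↥A, ((Finset.range s).filter (fun i => a ∉ At i)).card ≤
          ∑ _a : ↥A, Nat.log 2 m := Finset.sum_le_sum (fun a _ => hJle a)
        _ = Nat.card ↥A * Nat.log 2 m := by
            rw [Finset.sum_const, Finset.card_univ, smul_eq_mul, Nat.card_eq_fintype_card]
    have hlower : ((Finset.range s).filter (fun i => At i ≠ ⊤)).card * Nat.card ↥A ≤
        2 * ∑ i ∈ Finset.range s, (Finset.univ.filter (fun a : ↥A => a ∉ At i)).card := by
      calc ((Finset.range s).filter (fun i => At i ≠ ⊤)).card * Nat.card ↥A =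
          ∑ _i ∈ (Finset.range s).filter (fun i => At i ≠ ⊤), Nat.card ↥A := by
            rw [Finset.sum_const, smul_eq_mul]
        _ ≤ ∑ i ∈ (Finset.range s).filter (fun i => At i ≠ ⊤),
              2 * (Finset.univ.filter (fun a : ↥A => a ∉ At i)).card :=
            Finset.sum_le_sum (fun i hi => hhalf i (Finset.mem_filter.mp hi).2)
        _ = 2 * ∑ i ∈ (Finset.range s).filter (fun i => At i ≠ ⊤),
              (Finset.univ.filter (fun a : ↥A => a ∉ At i)).card := by rw [Finset.mul_sum]
        _ ≤ 2 * ∑ i ∈ Finset.range s,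
              (Finset.univ.filter (fun a : ↥A => a ∉ At i)).card := by
            apply Nat.mul_le_mul_left
            apply Finset.sum_le_sum_of_subset (Finset.filter_subset _ _)
    have hfin2 : ((Finset.range s).filter (fun i => At i ≠ ⊤)).card * Nat.card ↥A ≤
        (2 * Nat.log 2 m) * Nat.card ↥A := by
      calc ((Finset.range s).filter (fun i => At i ≠ ⊤)).card * Nat.card ↥A ≤
          2 * (Nat.card ↥A * Nat.log 2 m) :=
            le_trans hlower (Nat.mul_le_mul_left 2 hupper)
        _ = (2 * Nat.log 2 m) * Nat.card ↥A := by ring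
    exact Nat.le_of_mul_le_mul_right hfin2 hcApos
  -- put everything together
  have hB0 : Bf 0 = ⊤ := by
    rw [eq_top_iff]
    intro a _
    rw [hBfdef, CAB.mem_fixPt]
    intro x hx
    rw [hN0, Subgroup.mem_bot] at hx
    rw [hx]
    exact map_one _
  have hfinal := htel s 0 (by omega)
  rw [← Finset.range_eq_Ico] at hfinal
  calc Nat.card ↥A = Nat.card ↥(Bf 0) := by rw [hB0, Subgroup.card_top]
    _ ≤ T ^ (((Finset.range s).filter (fun i => At i ≠ ⊤)).card) := hfinal
    _ ≤ T ^ (2 * Nat.log 2 m) := Nat.pow_le_pow_right hT1 hEss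
end

section
/- Let p be a prime, P a finite p-group, and A a finite p'-group of automorphisms of P. If a ∈ A acts trivially on P/Φ(P), where Φ(P) is the Frattini subgroup, then a = 1. -/
open Subgroup

theorem eq_one_of_trivial_on_frattini_quotient {p : ℕ} (hp : p.Prime)
    {P : Type*} [Group P] [Finite P] (hP : IsPGroup p P)
    (a : MulAut P) (hcop : ¬ p ∣ orderOf a)
    (htriv : ∀ x : P, x⁻¹ * a x ∈ frattini P) : a = 1 := by
  classical
  by_contra ha
  -- the subgroup of automorphisms acting trivially mod Frattini
  set K : Subgroup (MulAut P) :=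
    { carrier := {σ : MulAut P | ∀ x : P, x⁻¹ * σ x ∈ frattini P}
      one_mem' := by intro x; simpa using (frattini P).one_mem
      mul_mem' := by
        intro σ τ hσ hτ x
        have h : x⁻¹ * (σ * τ) x = (x⁻¹ * τ x) * ((τ x)⁻¹ * σ (τ x)) := by
          simp [mul_assoc]
        rw [h]
        exact mul_mem (hτ x) (hσ (τ x))
      inv_mem' := by
        intro σ hσ x
        have h := hσ (σ⁻¹ x)
        rw [MulAut.apply_inv_self] at h
        have h2 : x⁻¹ * σ⁻¹ x = ((σ⁻¹ x)⁻¹ * x)⁻¹ := by group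
        rw [h2]
        exact inv_mem h } with hK
  have haK : a ∈ K := htriv
  have hn0 : orderOf a ≠ 0 := (isOfFinOrder_of_finite a).orderOf_pos.ne'
  have hn1 : orderOf a ≠ 1 := by simpa [orderOf_eq_one_iff] using ha
  set q := (orderOf a).minFac with hq
  have hqprime : q.Prime := Nat.minFac_prime hn1
  have hqdvd : q ∣ orderOf a := Nat.minFac_dvd _
  have hqp : q ≠ p := by rintro rfl; exact hcop hqdvd
  set b : MulAut P := a ^ (orderOf a / q) with hb
  have hbord : orderOf b = q := orderOf_pow_orderOf_div hn0 hqdvd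
  have hbK : b ∈ K := pow_mem haK _
  have hbzK : ∀ σ : MulAut P, σ ∈ zpowers b → σ ∈ K :=
    fun σ hσ => (zpowers_le.mpr hbK) hσ
  set Q := zpowers b with hQ
  have hQq : IsPGroup q Q := IsPGroup.of_card (by
    rw [Nat.card_zpowers, hbord, pow_one])
  have hchar : ∀ (σ : MulAut P) (z : P), z ∈ frattini P → σ z ∈ frattini P := by
    intro σ z hz
    exact (Subgroup.characteristic_iff_le_comap.mp frattini_characteristic σ) hz
  -- the set Ω of systems congruent to identity mod Frattini
  set Ω := {y : P → P // ∀ x : P, x⁻¹ * y x ∈ frattini P} with hΩ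
  letI : MulAction Q Ω :=
    { smul := fun σ y => ⟨fun x => σ.1 (y.1 x), by
        intro x
        have h1 : x⁻¹ * σ.1 x ∈ frattini P := hbzK σ.1 σ.2 x
        have h2 : σ.1 (x⁻¹ * y.1 x) ∈ frattini P := hchar σ.1 _ (y.2 x)
        have h : x⁻¹ * σ.1 (y.1 x) = (x⁻¹ * σ.1 x) * σ.1 (x⁻¹ * y.1 x) := by
          simp [mul_assoc]
        rw [h]
        exact mul_mem h1 h2⟩
      one_smul := fun y => by ext x; rfl
      mul_smul := fun σ τ y => by ext x; rfl }
  -- |Ω| is a power of p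
  have : Fact p.Prime := ⟨hp⟩
  obtain ⟨k, hk⟩ := (hP.to_subgroup (frattini P)).exists_card_eq
  have hΩcard : Nat.card Ω = p ^ (k * Nat.card P) := by
    have e : Ω ≃ (P → frattini P) :=
      { toFun := fun y => fun x => ⟨x⁻¹ * y.1 x, y.2 x⟩
        invFun := fun c => ⟨fun x => x * c x, fun x => by simp⟩
        left_inv := fun y => by ext x; simp
        right_inv := fun c => by ext x; simp }
    rw [Nat.card_congr e, Nat.card_fun, hk, ← pow_mul]
  have hqΩ : ¬ q ∣ Nat.card Ω := by
    rw [hΩcard]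
    intro h
    exact hqp ((Nat.prime_dvd_prime_iff_eq hqprime hp).mp (hqprime.dvd_of_dvd_pow h))
  -- fixed point
  have : Fact q.Prime := ⟨hqprime⟩
  obtain ⟨y, hy⟩ := hQq.nonempty_fixed_point_of_prime_not_dvd_card Ω hqΩ
  have hfix : ∀ x : P, b (y.1 x) = y.1 x := by
    intro x
    have h := hy ⟨b, mem_zpowers b⟩
    exact congrFun (congrArg Subtype.val h) x
  -- the range of y generates P
  set T := Subgroup.closure (Set.range y.1) with hT
  have hsup : T ⊔ frattini P = ⊤ := by
    rw [eq_top_iff']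
    intro x
    have hx : x = y.1 x * ((y.1 x)⁻¹ * x) := by group
    rw [hx]
    exact mul_mem (mem_sup_left (subset_closure ⟨x, rfl⟩))
      (mem_sup_right (by simpa using inv_mem (y.2 x)))
  have hTtop : T = ⊤ := frattini_nongenerating hsup
  -- b fixes a generating set, hence is trivial
  have hEq : ∀ x : P, b x = x := by
    intro x
    have hle : T ≤ MonoidHom.eqLocus (b : MulAut P).toMonoidHom (MonoidHom.id P) := by
      rw [hT]
      apply closure_le _ |>.mpr
      rintro z ⟨w, rfl⟩
      exact hfix w
    have := hle (hTtop ▸ mem_top x)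
    exact this
  have hb1 : b = 1 := by
    ext x
    simpa using hEq x
  rw [hb1, orderOf_one] at hbord
  exact hqprime.one_lt.ne' hbord.symm
end
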